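/- arXiv:2003.13227 — 4 statements merged into one kernel-verified Lean document; each statement's English description precedes it below -/
import Mathlib

section
/- Let X be a metrizable topological space, r ∈ (0,∞), and d, e ∈ Met(X) with D_X(d, e) ≤ r. Let X₀ = X, let X₁ be a set disjoint from X₀ with card(X₁) = card(X₀), and let τ : X₀ → X₁ be a bijection; give X₁ the topology transported from X by τ. Then there exists a metric h ∈ Met(X₀ ⊔ X₁) on the topological disjoint union X₀ ⊔ X₁ such that (1) h restricted to X₀ × X₀ equals d, (2) h restricted to X₁ × X₁ equals the pushforward metric (τ⁻¹)*e defined by ((τ⁻¹)*e)(u,v) = e(τ⁻¹(u), τ⁻¹(v)), and (3) h(x, τ(x)) = r/2 for every x ∈ X₀. -/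
open scoped ENNReal

/-- The distance function of a bundled metric-space structure. -/
noncomputable def mdist {X : Type*} (m : MetricSpace X) (x y : X) : ℝ :=
  m.toDist.dist x y

/-- `Met(X)`: the set of metrics (bundled metric-space structures) on `X` that induce
the given topology of `X`. -/
def MetricsOn (X : Type*) [t : TopologicalSpace X] : Set (MetricSpace X) :=
  { m | m.toUniformSpace.toTopologicalSpace = t }

/-- The extended sup-metric `D_X` on metrics on `X`. -/
noncomputable def metD {X : Type*} (d e : MetricSpace X) : ℝ≥0∞ :=
  ⨆ p : X × X, ENNReal.ofReal |mdist d p.1 p.2 - mdist e p.1 p.2|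

/-- Openness criterion for a metric inducing the topology. -/
theorem isOpen_iff_met {X : Type*} [t : TopologicalSpace X] {m : MetricSpace X}
    (hm : m ∈ MetricsOn X) (s : Set X) :
    IsOpen s ↔ ∀ x ∈ s, ∃ ε > 0, ∀ y, mdist m x y < ε → y ∈ s := by
  have hm' : m.toUniformSpace.toTopologicalSpace = t := hm
  subst hm'
  letI := m
  refine Metric.isOpen_iff.trans ?_
  constructor
  · rintro H x hx
    obtain ⟨ε, hε, hb⟩ := H x hx
    refine ⟨ε, hε, fun y hy => hb ?_⟩
    simpa [Metric.mem_ball, dist_comm, mdist] using hy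
  · rintro H x hx
    obtain ⟨ε, hε, hb⟩ := H x hx
    refine ⟨ε, hε, fun y hy => hb y ?_⟩
    simpa [Metric.mem_ball, dist_comm, mdist] using hy

/-- A copy `X₁` of `X` is realized as a type equipped with the topology transported by a
homeomorphism `τ : X ≃ₜ X₁`; the disjoint union `X₀ ⊔ X₁` is the sum type `X ⊕ X₁` with the
direct sum topology.  The pushforward metric `(τ⁻¹)*e` is `(u, v) ↦ e(τ⁻¹ u, τ⁻¹ v)`. -/
theorem metric_amalgamation_of_two_copies {X : Type*} [TopologicalSpace X]
    [TopologicalSpace.MetrizableSpace X] (r : ℝ) (hr : 0 < r)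
    (d e : MetricSpace X) (hd : d ∈ MetricsOn X) (he : e ∈ MetricsOn X)
    (hde : metD d e ≤ ENNReal.ofReal r)
    (X₁ : Type*) [TopologicalSpace X₁] (τ : X ≃ₜ X₁) :
    ∃ h ∈ MetricsOn (X ⊕ X₁),
      (∀ x y : X, mdist h (Sum.inl x) (Sum.inl y) = mdist d x y) ∧
      (∀ u v : X₁, mdist h (Sum.inr u) (Sum.inr v) = mdist e (τ.symm u) (τ.symm v)) ∧
      (∀ x : X, mdist h (Sum.inl x) (Sum.inr (τ x)) = r / 2) := by
  classical
  set dd : X → X → ℝ := fun x y => mdist d x y with hdd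
  set ee : X → X → ℝ := fun x y => mdist e x y with hee
  -- basic metric facts
  have dd_nonneg : ∀ x y, 0 ≤ dd x y := fun x y => @dist_nonneg _ d.toPseudoMetricSpace x y
  have ee_nonneg : ∀ x y, 0 ≤ ee x y := fun x y => @dist_nonneg _ e.toPseudoMetricSpace x y
  have dd_comm : ∀ x y, dd x y = dd y x := fun x y => d.dist_comm x y
  have ee_comm : ∀ x y, ee x y = ee y x := fun x y => e.dist_comm x y
  have dd_tri : ∀ x y z, dd x z ≤ dd x y + dd y z := fun x y z => d.dist_triangle x y z
  have ee_tri : ∀ x y z, ee x z ≤ ee x y + ee y z := fun x y z => e.dist_triangle x y z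
  have dd_self : ∀ x, dd x x = 0 := fun x => d.dist_self x
  have ee_self : ∀ x, ee x x = 0 := fun x => e.dist_self x
  -- pointwise bound
  have key : ∀ x y : X, |dd x y - ee x y| ≤ r := by
    intro x y
    have h1 : ENNReal.ofReal |dd x y - ee x y| ≤ ENNReal.ofReal r := by
      refine le_trans ?_ hde
      exact le_iSup (fun p : X × X => ENNReal.ofReal |mdist d p.1 p.2 - mdist e p.1 p.2|) (x, y)
    exact (ENNReal.ofReal_le_ofReal_iff hr.le).1 h1
  have key_de : ∀ x y : X, dd x y ≤ ee x y + r := fun x y => by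
    have := key x y; have := abs_le.1 (key x y); linarith [this.2]
  have key_ed : ∀ x y : X, ee x y ≤ dd x y + r := fun x y => by
    have := abs_le.1 (key x y); linarith [this.1]
  -- the bridging infimum
  set A : X → X → ℝ := fun x w => ⨅ z : X, (dd x z + ee z w) with hA
  have Abdd : ∀ x w : X, BddBelow (Set.range fun z : X => dd x z + ee z w) := by
    intro x w
    exact ⟨0, by rintro _ ⟨z, rfl⟩; exact add_nonneg (dd_nonneg _ _) (ee_nonneg _ _)⟩
  have A_nonneg : ∀ x w : X, 0 ≤ A x w := by
    intro x w
    exact Real.iInf_nonneg fun z => add_nonneg (dd_nonneg _ _) (ee_nonneg _ _)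
  have A_le : ∀ x w z : X, A x w ≤ dd x z + ee z w := fun x w z => ciInf_le (Abdd x w) z
  have A_self : ∀ x : X, A x x = 0 := by
    intro x
    refine le_antisymm ?_ (A_nonneg x x)
    have := A_le x x x
    simpa [dd_self, ee_self] using this
  have hA1 : ∀ x y w : X, A x w ≤ dd x y + A y w := by
    intro x y w
    haveI : Nonempty X := ⟨x⟩
    have h2 : A x w - dd x y ≤ A y w := by
      refine le_ciInf fun z => ?_
      have := A_le x w z
      have := dd_tri x y z
      linarith [A_le x w z, dd_tri x y z]
    linarith
  have hA2 : ∀ x v w : X, A x w ≤ A x v + ee v w := by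
    intro x v w
    haveI : Nonempty X := ⟨x⟩
    have h2 : A x w - ee v w ≤ A x v := by
      refine le_ciInf fun z => ?_
      linarith [A_le x w z, ee_tri z v w]
    linarith
  have hA3 : ∀ x y w : X, dd x y ≤ A x w + A y w + r := by
    intro x y w
    haveI : Nonempty X := ⟨x⟩
    have h1 : ∀ z' : X, dd x y - r - (dd y z' + ee z' w) ≤ A x w := by
      intro z'
      refine le_ciInf fun z => ?_
      have t1 : dd x y ≤ dd x z + dd z z' + dd z' y := by
        linarith [dd_tri x z y, dd_tri z z' y]
      have t2 : dd z z' ≤ ee z z' + r := key_de z z'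
      have t3 : ee z z' ≤ ee z w + ee w z' := ee_tri z w z'
      have t4 : ee w z' = ee z' w := ee_comm w z'
      have t5 : dd z' y = dd y z' := dd_comm z' y
      linarith
    have h2 : dd x y - r - A x w ≤ A y w := by
      refine le_ciInf fun z' => ?_
      linarith [h1 z']
    linarith
  have hA4 : ∀ x u v : X, ee u v ≤ A x u + A x v + r := by
    intro x u v
    haveI : Nonempty X := ⟨x⟩
    have h1 : ∀ z' : X, ee u v - r - (dd x z' + ee z' v) ≤ A x u := by
      intro z'
      refine le_ciInf fun z => ?_
      have t1 : ee u v ≤ ee u z + ee z z' + ee z' v := by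
        linarith [ee_tri u z v, ee_tri z z' v]
      have t2 : ee z z' ≤ dd z z' + r := key_ed z z'
      have t3 : dd z z' ≤ dd z x + dd x z' := dd_tri z x z'
      have t4 : dd z x = dd x z := dd_comm z x
      have t5 : ee u z = ee z u := ee_comm u z
      linarith
    have h2 : ee u v - r - A x u ≤ A x v := by
      refine le_ciInf fun z' => ?_
      linarith [h1 z']
    linarith
  -- the distance function on the sum
  set F : (X ⊕ X₁) → (X ⊕ X₁) → ℝ := fun p q =>
    match p, q with
    | .inl x, .inl y => dd x y
    | .inr u, .inr v => ee (τ.symm u) (τ.symm v)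
    | .inl x, .inr u => r / 2 + A x (τ.symm u)
    | .inr u, .inl x => r / 2 + A x (τ.symm u)
    with hF
  have F_self : ∀ p, F p p = 0 := by
    rintro (x | u)
    · simpa using dd_self x
    · simpa using ee_self (τ.symm u)
  have F_comm : ∀ p q, F p q = F q p := by
    rintro (x | u) (y | v)
    · exact dd_comm x y
    · rfl
    · rfl
    · exact ee_comm _ _
  have F_tri : ∀ p q s, F p s ≤ F p q + F q s := by
    rintro (x | u) (y | v) (z | w)
    · exact dd_tri x y z
    · -- inl inl inr
      show r / 2 + A x (τ.symm w) ≤ dd x y + (r / 2 + A y (τ.symm w))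
      linarith [hA1 x y (τ.symm w)]
    · -- inl inr inl
      show dd x z ≤ (r / 2 + A x (τ.symm v)) + (r / 2 + A z (τ.symm v))
      linarith [hA3 x z (τ.symm v)]
    · -- inl inr inr
      show r / 2 + A x (τ.symm w) ≤ (r / 2 + A x (τ.symm v)) + ee (τ.symm v) (τ.symm w)
      linarith [hA2 x (τ.symm v) (τ.symm w)]
    · -- inr inl inl
      show r / 2 + A z (τ.symm u) ≤ (r / 2 + A y (τ.symm u)) + dd y z
      have := hA1 z y (τ.symm u)
      have := dd_comm z y
      linarith [hA1 z y (τ.symm u), dd_comm y z]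
    · -- inr inl inr
      show ee (τ.symm u) (τ.symm w) ≤ (r / 2 + A y (τ.symm u)) + (r / 2 + A y (τ.symm w))
      linarith [hA4 y (τ.symm u) (τ.symm w)]
    · -- inr inr inl
      show r / 2 + A z (τ.symm u) ≤ ee (τ.symm u) (τ.symm v) + (r / 2 + A z (τ.symm v))
      have h := hA2 z (τ.symm v) (τ.symm u)
      have := ee_comm (τ.symm v) (τ.symm u)
      linarith
    · exact ee_tri _ _ _
  have F_eq : ∀ p q, F p q = 0 → p = q := by
    rintro (x | u) (y | v) hpq
    · exact congrArg Sum.inl (d.eq_of_dist_eq_zero hpq)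
    · exfalso
      have : 0 ≤ A x (τ.symm v) := A_nonneg _ _
      have : (0 : ℝ) < r / 2 + A x (τ.symm v) := by linarith
      rw [show F (Sum.inl x) (Sum.inr v) = r / 2 + A x (τ.symm v) from rfl] at hpq
      linarith
    · exfalso
      have : 0 ≤ A y (τ.symm u) := A_nonneg _ _
      have : (0 : ℝ) < r / 2 + A y (τ.symm u) := by linarith
      rw [show F (Sum.inr u) (Sum.inl y) = r / 2 + A y (τ.symm u) from rfl] at hpq
      linarith
    · have : τ.symm u = τ.symm v := e.eq_of_dist_eq_zero hpq
      exact congrArg Sum.inr (τ.symm.injective this)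
  -- metric on X₁
  set e₁ : MetricSpace X₁ := MetricSpace.induced τ.symm τ.symm.injective e with he₁def
  have he₁ : e₁ ∈ MetricsOn X₁ := by
    show e₁.toUniformSpace.toTopologicalSpace = _
    have h1 : e₁.toUniformSpace = UniformSpace.comap τ.symm e.toUniformSpace := rfl
    rw [h1, UniformSpace.toTopologicalSpace_comap, he]
    exact (τ.symm.isInducing.eq_induced).symm
  have e₁_dist : ∀ u v : X₁, mdist e₁ u v = ee (τ.symm u) (τ.symm v) := fun u v => rfl
  -- the openness characterization
  have Hopen : ∀ s : Set (X ⊕ X₁),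
      IsOpen s ↔ ∀ p ∈ s, ∃ ε > 0, ∀ q, F p q < ε → q ∈ s := by
    intro s
    rw [isOpen_sum_iff]
    constructor
    · rintro ⟨hl, hr'⟩ (x | u) hp
      · obtain ⟨ε, hε, hb⟩ := (isOpen_iff_met hd _).1 hl x hp
        refine ⟨min ε (r / 2), lt_min hε (by linarith), ?_⟩
        rintro (y | v) hq
        · exact hb y (lt_of_lt_of_le hq (min_le_left _ _))
        · exfalso
          have h1 : F (Sum.inl x) (Sum.inr v) = r / 2 + A x (τ.symm v) := rfl
          have h2 : min ε (r / 2) ≤ r / 2 := min_le_right _ _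
          have h3 : 0 ≤ A x (τ.symm v) := A_nonneg _ _
          rw [h1] at hq
          linarith
      · obtain ⟨ε, hε, hb⟩ := (isOpen_iff_met he₁ _).1 hr' u hp
        refine ⟨min ε (r / 2), lt_min hε (by linarith), ?_⟩
        rintro (y | v) hq
        · exfalso
          have h1 : F (Sum.inr u) (Sum.inl y) = r / 2 + A y (τ.symm u) := rfl
          have h2 : min ε (r / 2) ≤ r / 2 := min_le_right _ _
          have h3 : 0 ≤ A y (τ.symm u) := A_nonneg _ _
          rw [h1] at hq
          linarith
        · refine hb v ?_
          rw [e₁_dist]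
          exact lt_of_lt_of_le hq (min_le_left _ _)
    · intro H
      constructor
      · refine (isOpen_iff_met hd _).2 fun x hx => ?_
        obtain ⟨ε, hε, hb⟩ := H (Sum.inl x) hx
        exact ⟨ε, hε, fun y hy => hb (Sum.inl y) hy⟩
      · refine (isOpen_iff_met he₁ _).2 fun u hu => ?_
        obtain ⟨ε, hε, hb⟩ := H (Sum.inr u) hu
        refine ⟨ε, hε, fun v hv => hb (Sum.inr v) ?_⟩
        rw [e₁_dist] at hv
        exact hv
  -- construct the metric
  refine ⟨MetricSpace.ofDistTopology F F_self F_comm F_tri Hopen F_eq, rfl, ?_, ?_, ?_⟩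
  · intro x y; rfl
  · intro u v; rfl
  · intro x
    show r / 2 + A x (τ.symm (τ x)) = r / 2
    rw [Homeomorph.symm_apply_apply, A_self]
    ring
end

section
/- Let X be a non-discrete metrizable topological space. Then the set of all d ∈ Met(X) such that the metric space (X, d) is not doubling is a dense G_δ subset of Met(X). -/
open scoped ENNReal

/-- The space `Met(X)` of metrics on `X` compatible with its topology. -/
def Met (X : Type*) [TopologicalSpace X] : Type _ :=
  { m : MetricSpace X // m ∈ MetricsOn X }

/-- The topology on `Met(X)` generated by the extended metric `D_X`, i.e. generated by the
open balls of `D_X`. -/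
instance Met.topologicalSpace (X : Type*) [TopologicalSpace X] : TopologicalSpace (Met X) :=
  TopologicalSpace.generateFrom
    { U | ∃ (d : Met X) (ε : ℝ≥0∞), 0 < ε ∧ U = { e : Met X | metD d.1 e.1 < ε } }

/-- `δ_d(A)`: the diameter of `A` with respect to the metric `m`. -/
noncomputable def setDiam {X : Type*} (m : MetricSpace X) (A : Set X) : ℝ :=
  @Metric.diam X m.toPseudoMetricSpace A

/-- `α_d(A) = inf { d(x,y) : x, y ∈ A, x ≠ y }`. -/
noncomputable def setSep {X : Type*} (m : MetricSpace X) (A : Set X) : ℝ :=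
  sInf { r : ℝ | ∃ x ∈ A, ∃ y ∈ A, x ≠ y ∧ r = mdist m x y }

/-- A metric space is doubling if there are `C, α > 0` such that every finite subset `A`
with at least two points satisfies `card A ≤ C (δ(A)/α(A))^α`. -/
def IsDoublingMetric {X : Type*} (m : MetricSpace X) : Prop :=
  ∃ C : ℝ, 0 < C ∧ ∃ α : ℝ, 0 < α ∧ ∀ A : Finset X, 2 ≤ A.card →
    (A.card : ℝ) ≤ C * (setDiam m ↑A / setSep m ↑A) ^ α

namespace NonDoublingAux

variable {X : Type*}

/-! ### Basic facts about `mdist` -/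

lemma mdist_nonneg (m : MetricSpace X) (u v : X) : 0 ≤ mdist m u v := by
  letI := m; exact dist_nonneg

lemma mdist_comm (m : MetricSpace X) (u v : X) : mdist m u v = mdist m v u := by
  letI := m; exact dist_comm u v

lemma mdist_triangle (m : MetricSpace X) (u v w : X) :
    mdist m u w ≤ mdist m u v + mdist m v w := by
  letI := m; exact dist_triangle u v w

lemma mdist_self (m : MetricSpace X) (u : X) : mdist m u u = 0 := by
  letI := m; exact dist_self u

lemma mdist_pos (m : MetricSpace X) {u v : X} (h : u ≠ v) : 0 < mdist m u v := by
  letI := m; exact dist_pos.2 h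

lemma eq_of_mdist_eq_zero (m : MetricSpace X) {u v : X} (h : mdist m u v = 0) : u = v := by
  letI := m; exact eq_of_dist_eq_zero h

lemma abs_mdist_sub_le (m : MetricSpace X) (u v w : X) :
    |mdist m u w - mdist m v w| ≤ mdist m u v := by
  letI := m; exact abs_dist_sub_le u v w

/-! ### Basic facts about `metD` -/

lemma metD_self (m : MetricSpace X) : metD m m = 0 := by
  refine le_antisymm (iSup_le fun p => ?_) zero_le
  simp

lemma metD_triangle (a b c : MetricSpace X) : metD a c ≤ metD a b + metD b c := by
  refine iSup_le fun p => ?_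
  calc ENNReal.ofReal |mdist a p.1 p.2 - mdist c p.1 p.2|
      ≤ ENNReal.ofReal (|mdist a p.1 p.2 - mdist b p.1 p.2| +
          |mdist b p.1 p.2 - mdist c p.1 p.2|) := by
        apply ENNReal.ofReal_le_ofReal
        exact abs_sub_le _ _ _
    _ ≤ ENNReal.ofReal |mdist a p.1 p.2 - mdist b p.1 p.2| +
          ENNReal.ofReal |mdist b p.1 p.2 - mdist c p.1 p.2| := ENNReal.ofReal_add_le
    _ ≤ metD a b + metD b c := by
        exact add_le_add (le_iSup (fun q : X × X =>
          ENNReal.ofReal |mdist a q.1 q.2 - mdist b q.1 q.2|) p)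
          (le_iSup (fun q : X × X =>
          ENNReal.ofReal |mdist b q.1 q.2 - mdist c q.1 q.2|) p)

lemma metD_lt_real {m e : MetricSpace X} {s : ℝ} (hs : 0 < s)
    (h : metD m e < ENNReal.ofReal s) (u v : X) : |mdist m u v - mdist e u v| < s := by
  have := lt_of_le_of_lt (le_iSup (fun q : X × X =>
    ENNReal.ofReal |mdist m q.1 q.2 - mdist e q.1 q.2|) (u, v)) h
  exact (ENNReal.ofReal_lt_ofReal_iff hs).1 this

lemma metD_le_real {m e : MetricSpace X} {s : ℝ}
    (h : ∀ u v, |mdist m u v - mdist e u v| ≤ s) : metD m e ≤ ENNReal.ofReal s :=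
  iSup_le fun p => ENNReal.ofReal_le_ofReal (h p.1 p.2)

/-! ### `setDiam` and `setSep` -/

lemma setDiam_nonneg (m : MetricSpace X) (A : Set X) : 0 ≤ setDiam m A :=
  @Metric.diam_nonneg X A m.toPseudoMetricSpace

def sepSet (m : MetricSpace X) (A : Set X) : Set ℝ :=
  { r : ℝ | ∃ x ∈ A, ∃ y ∈ A, x ≠ y ∧ r = mdist m x y }

lemma setSep_def (m : MetricSpace X) (A : Set X) : setSep m A = sInf (sepSet m A) := rfl

lemma sepSet_finite (m : MetricSpace X) (A : Finset X) : (sepSet m (↑A : Set X)).Finite := by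
  have : sepSet m (↑A : Set X) ⊆ (fun q : X × X => mdist m q.1 q.2) '' ↑(A ×ˢ A) := by
    rintro r ⟨x, hx, y, hy, hxy, rfl⟩
    exact ⟨(x, y), by simp [hx, hy], rfl⟩
  exact Set.Finite.subset (Set.Finite.image _ (A ×ˢ A).finite_toSet) this

lemma sepSet_nonempty (m : MetricSpace X) {A : Finset X} (h : 1 < A.card) :
    (sepSet m (↑A : Set X)).Nonempty := by
  obtain ⟨a, ha, b, hb, hab⟩ := Finset.one_lt_card.1 h
  exact ⟨mdist m a b, a, ha, b, hb, hab, rfl⟩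

lemma setSep_mem (m : MetricSpace X) {A : Finset X} (h : 1 < A.card) :
    setSep m ↑A ∈ sepSet m (↑A : Set X) :=
  (sepSet_nonempty m h).csInf_mem (sepSet_finite m A)

lemma setSep_pos (m : MetricSpace X) {A : Finset X} (h : 1 < A.card) :
    0 < setSep m ↑A := by
  obtain ⟨x, _, y, _, hxy, hr⟩ := setSep_mem m h
  have : setSep m ↑A = mdist m x y := hr
  rw [this]
  exact mdist_pos m hxy

lemma setSep_le_mdist (m : MetricSpace X) {A : Finset X} {x y : X}
    (hx : x ∈ A) (hy : y ∈ A) (hxy : x ≠ y) : setSep m ↑A ≤ mdist m x y :=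
  csInf_le (Set.Finite.bddBelow (sepSet_finite m A)) ⟨x, hx, y, hy, hxy, rfl⟩

lemma mdist_le_setDiam (m : MetricSpace X) {A : Finset X} {x y : X}
    (hx : x ∈ A) (hy : y ∈ A) : mdist m x y ≤ setDiam m ↑A :=
  @Metric.dist_le_diam_of_mem X _ _ _ m.toPseudoMetricSpace
    (Set.Finite.isBounded A.finite_toSet) hx hy

lemma setSep_le_setDiam (m : MetricSpace X) {A : Finset X} (h : 1 < A.card) :
    setSep m ↑A ≤ setDiam m ↑A := by
  obtain ⟨a, ha, b, hb, hab⟩ := Finset.one_lt_card.1 h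
  exact (setSep_le_mdist m ha hb hab).trans (mdist_le_setDiam m ha hb)

lemma setDiam_le_add (m₁ m₂ : MetricSpace X) (A : Finset X) {s : ℝ} (hs : 0 ≤ s)
    (h : ∀ u v, |mdist m₁ u v - mdist m₂ u v| ≤ s) :
    setDiam m₂ ↑A ≤ setDiam m₁ ↑A + s := by
  refine @Metric.diam_le_of_forall_dist_le X _ m₂.toPseudoMetricSpace _
    (add_nonneg (setDiam_nonneg m₁ ↑A) hs) (fun u hu v hv => ?_)
  have h1 : mdist m₂ u v ≤ mdist m₁ u v + s := by
    have := h u v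
    have := abs_le.1 this
    linarith [this.1]
  exact h1.trans (add_le_add_left (mdist_le_setDiam m₁ hu hv) s)

lemma setSep_sub_le (m₁ m₂ : MetricSpace X) {A : Finset X} (hA : 1 < A.card) {s : ℝ}
    (h : ∀ u v, |mdist m₁ u v - mdist m₂ u v| ≤ s) :
    setSep m₁ ↑A - s ≤ setSep m₂ ↑A := by
  refine le_csInf (sepSet_nonempty m₂ hA) ?_
  rintro r ⟨u, hu, v, hv, huv, rfl⟩
  have h1 := abs_le.1 (h u v)
  have h2 := setSep_le_mdist m₁ hu hv huv
  linarith [h1.1]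

lemma setDiam_const (e : MetricSpace X) {A : Finset X} {c : ℝ} (hc : 0 ≤ c)
    (hA : 1 < A.card) (h : ∀ u ∈ A, ∀ v ∈ A, u ≠ v → mdist e u v = c) :
    setDiam e ↑A = c := by
  refine le_antisymm ?_ ?_
  · refine @Metric.diam_le_of_forall_dist_le X _ e.toPseudoMetricSpace _ hc
      (fun u hu v hv => ?_)
    rcases eq_or_ne u v with rfl | huv
    · have : mdist e u u = 0 := mdist_self e u
      calc (dist u u : ℝ) = mdist e u u := rfl
        _ ≤ c := by rw [this]; exact hc
    · exact (h u hu v hv huv).le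
  · obtain ⟨a, ha, b, hb, hab⟩ := Finset.one_lt_card.1 hA
    have := mdist_le_setDiam e ha hb
    rw [h a ha b hb hab] at this
    exact this

lemma setSep_const (e : MetricSpace X) {A : Finset X} {c : ℝ}
    (hA : 1 < A.card) (h : ∀ u ∈ A, ∀ v ∈ A, u ≠ v → mdist e u v = c) :
    setSep e ↑A = c := by
  have hset : sepSet e (↑A : Set X) = {c} := by
    apply Set.eq_singleton_iff_nonempty_unique_mem.2
    refine ⟨sepSet_nonempty e hA, ?_⟩
    rintro r ⟨u, hu, v, hv, huv, rfl⟩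
    exact h u hu v hv huv
  rw [setSep_def, hset, csInf_singleton]

/-! ### Openness criteria in `Met X` -/

lemma met_isOpen_of [TopologicalSpace X] {U : Set (Met X)}
    (h : ∀ d ∈ U, ∃ ε : ℝ≥0∞, 0 < ε ∧ ∀ e : Met X, metD d.1 e.1 < ε → e ∈ U) :
    IsOpen U := by
  choose! ε hε hsub using h
  have hU : U = ⋃ d ∈ U, { e : Met X | metD d.1 e.1 < ε d } := by
    apply Set.Subset.antisymm
    · intro d hd
      refine Set.mem_biUnion hd ?_
      simp only [Set.mem_setOf_eq, metD_self]
      exact hε d hd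
    · intro e he
      simp only [Set.mem_iUnion, Set.mem_setOf_eq] at he
      obtain ⟨d, hd, hlt⟩ := he
      exact hsub d hd e hlt
  rw [hU]
  refine isOpen_biUnion fun d hd => ?_
  exact TopologicalSpace.isOpen_generateFrom_of_mem ⟨d, ε d, hε d hd, rfl⟩

lemma met_exists_ball [TopologicalSpace X] {U : Set (Met X)} (hU : IsOpen U)
    {d : Met X} (hd : d ∈ U) :
    ∃ ε : ℝ≥0∞, 0 < ε ∧ ∀ e : Met X, metD d.1 e.1 < ε → e ∈ U := by
  have key : ∀ V : Set (Met X), TopologicalSpace.GenerateOpen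
      { U | ∃ (d : Met X) (ε : ℝ≥0∞), 0 < ε ∧ U = { e : Met X | metD d.1 e.1 < ε } } V →
      ∀ d ∈ V, ∃ ε : ℝ≥0∞, 0 < ε ∧ ∀ e : Met X, metD d.1 e.1 < ε → e ∈ V := by
    intro V hV
    induction hV with
    | basic W hW =>
      obtain ⟨d₀, ε₀, hε₀, rfl⟩ := hW
      intro d hd
      simp only [Set.mem_setOf_eq] at hd
      refine ⟨ε₀ - metD d₀.1 d.1, tsub_pos_iff_lt.2 hd, fun e he => ?_⟩
      simp only [Set.mem_setOf_eq]
      calc metD d₀.1 e.1 ≤ metD d₀.1 d.1 + metD d.1 e.1 := metD_triangle _ _ _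
        _ < metD d₀.1 d.1 + (ε₀ - metD d₀.1 d.1) :=
            ENNReal.add_lt_add_left (ne_top_of_lt hd) he
        _ = ε₀ := add_tsub_cancel_of_le hd.le
    | univ => exact fun d _ => ⟨1, one_pos, fun e _ => trivial⟩
    | inter V₁ V₂ _ _ ih₁ ih₂ =>
      intro d hd
      obtain ⟨ε₁, hε₁, h₁⟩ := ih₁ d hd.1
      obtain ⟨ε₂, hε₂, h₂⟩ := ih₂ d hd.2
      exact ⟨min ε₁ ε₂, lt_min hε₁ hε₂, fun e he =>
        ⟨h₁ e (he.trans_le (min_le_left _ _)), h₂ e (he.trans_le (min_le_right _ _))⟩⟩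
    | sUnion S _ ih =>
      rintro d ⟨V, hVS, hdV⟩
      obtain ⟨ε, hε, h⟩ := ih V hVS d hdV
      exact ⟨ε, hε, fun e he => ⟨V, hVS, h e he⟩⟩
  exact key U hU d hd

lemma exists_bound (g : ℕ → ℝ) (M : ℕ) : ∃ L : ℝ, 0 ≤ L ∧ ∀ k < M, g k ≤ L := by
  induction M with
  | zero => exact ⟨0, le_refl 0, fun k hk => absurd hk (Nat.not_lt_zero k)⟩
  | succ M ih =>
    obtain ⟨L, hL0, hL⟩ := ih
    refine ⟨max L (g M), le_trans hL0 (le_max_left _ _), fun k hk => ?_⟩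
    rcases Nat.lt_succ_iff_lt_or_eq.1 hk with h | rfl
    · exact (hL k h).trans (le_max_left _ _)
    · exact le_max_right _ _

/-! ### The perturbation construction -/

/-- Amplitude for the `k`-th bump: `2 * d(x_{⌊√k⌋²}, p)`. -/
noncomputable def aval (m : MetricSpace X) (p : X) (x : ℕ → X) (k : ℕ) : ℝ :=
  2 * mdist m (x (Nat.sqrt k * Nat.sqrt k)) p

/-- The `k`-th bump function, supported near `x k`. -/
noncomputable def bump (m : MetricSpace X) (p : X) (x : ℕ → X) (k : ℕ) (y : X) : ℝ :=
  max (aval m p x k * (1 - mdist m y (x k) / (mdist m (x k) p / 4))) 0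

/-- The sup-of-bumps pseudometric. -/
noncomputable def hfun (m : MetricSpace X) (p : X) (x : ℕ → X) (y z : X) : ℝ :=
  ⨆ k, |bump m p x k y - bump m p x k z|

section Construction

variable (m : MetricSpace X) (p : X) (x : ℕ → X)
variable (hne : ∀ k, x k ≠ p)
variable (hdec : ∀ k, mdist m (x (k + 1)) p < mdist m (x k) p / 4)

include hne in
lemma T_pos (k : ℕ) : 0 < mdist m (x k) p := mdist_pos m (hne k)

include hne hdec in
lemma T_anti : ∀ {j k : ℕ}, j ≤ k → mdist m (x k) p ≤ mdist m (x j) p := by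
  have step : ∀ k, mdist m (x (k + 1)) p ≤ mdist m (x k) p := by
    intro k
    have := hdec k
    have := T_pos m p x hne k
    linarith
  intro j k hjk
  induction hjk with
  | refl => exact le_rfl
  | step h ih => exact le_trans (step _) ih

include hne hdec in
lemma T_lt4 {j k : ℕ} (h : j < k) : mdist m (x k) p < mdist m (x j) p / 4 :=
  lt_of_le_of_lt (T_anti m p x hne hdec h) (hdec j)

include hne hdec in
lemma sep_lemma {j k : ℕ} (h : j ≠ k) :
    mdist m (x k) p / 4 ≤ mdist m (x j) (x k) := by
  have htri : mdist m (x j) p ≤ mdist m (x j) (x k) + mdist m (x k) p :=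
    mdist_triangle m (x j) (x k) p
  have htri2 : mdist m (x k) p ≤ mdist m (x k) (x j) + mdist m (x j) p :=
    mdist_triangle m (x k) (x j) p
  have hcomm : mdist m (x k) (x j) = mdist m (x j) (x k) := mdist_comm m _ _
  rcases lt_or_gt_of_ne h with hlt | hgt
  · have h4 := T_lt4 m p x hne hdec hlt
    have := T_pos m p x hne k
    linarith
  · have h4 := T_lt4 m p x hne hdec hgt
    have := T_pos m p x hne k
    linarith

include hne hdec in
lemma x_inj : Function.Injective x := by
  intro j k hjk
  by_contra h
  have := sep_lemma m p x hne hdec h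
  rw [hjk, mdist_self] at this
  have := T_pos m p x hne k
  linarith

include hne in
lemma aval_pos (k : ℕ) : 0 < aval m p x k := by
  have := T_pos m p x hne (Nat.sqrt k * Nat.sqrt k)
  unfold aval; linarith

include hne hdec in
lemma aval_le (k : ℕ) : aval m p x k ≤ 2 * mdist m (x 0) p := by
  have := T_anti m p x hne hdec (Nat.zero_le (Nat.sqrt k * Nat.sqrt k))
  unfold aval; linarith

lemma bump_nonneg (k : ℕ) (y : X) : 0 ≤ bump m p x k y := le_max_right _ _

include hne in
lemma bump_le (k : ℕ) (y : X) : bump m p x k y ≤ aval m p x k := by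
  have ha := (aval_pos m p x hne k).le
  have hd : 0 ≤ mdist m y (x k) / (mdist m (x k) p / 4) :=
    div_nonneg (mdist_nonneg m _ _) (by linarith [T_pos m p x hne k])
  refine max_le ?_ ha
  nlinarith

include hne in
lemma bump_abs_le (k : ℕ) (y z : X) :
    |bump m p x k y - bump m p x k z| ≤ aval m p x k := by
  rw [abs_le]
  constructor
  · have := bump_nonneg m p x k y
    have := bump_le m p x hne k z
    linarith
  · have := bump_nonneg m p x k z
    have := bump_le m p x hne k y
    linarith

include hne in
lemma bump_self (k : ℕ) : bump m p x k (x k) = aval m p x k := by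
  unfold bump
  rw [mdist_self, zero_div, sub_zero, mul_one]
  exact max_eq_left (aval_pos m p x hne k).le

include hne in
lemma bump_eq_zero {k : ℕ} {y : X}
    (h : mdist m (x k) p / 4 ≤ mdist m y (x k)) : bump m p x k y = 0 := by
  unfold bump
  apply max_eq_right
  have hR : 0 < mdist m (x k) p / 4 := by linarith [T_pos m p x hne k]
  have h1 : 1 ≤ mdist m y (x k) / (mdist m (x k) p / 4) := (one_le_div hR).2 h
  have ha := (aval_pos m p x hne k).le
  nlinarith

include hne hdec in
lemma bump_ne {j k : ℕ} (h : j ≠ k) : bump m p x k (x j) = 0 := by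
  apply bump_eq_zero m p x hne
  exact sep_lemma m p x hne hdec h

include hne in
lemma bump_lipschitz (k : ℕ) (y z : X) :
    |bump m p x k y - bump m p x k z| ≤
      (aval m p x k / (mdist m (x k) p / 4)) * mdist m y z := by
  have hR : 0 < mdist m (x k) p / 4 := by linarith [T_pos m p x hne k]
  have ha := (aval_pos m p x hne k).le
  set A := aval m p x k with hA
  set R := mdist m (x k) p / 4 with hRdef
  have step1 : |bump m p x k y - bump m p x k z| ≤
      |A * (1 - mdist m y (x k) / R) - A * (1 - mdist m z (x k) / R)| :=
    abs_max_sub_max_le_abs _ _ _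
  have step2 : A * (1 - mdist m y (x k) / R) - A * (1 - mdist m z (x k) / R) =
      (A / R) * (mdist m z (x k) - mdist m y (x k)) := by
    field_simp
    ring
  refine step1.trans ?_
  rw [step2, abs_mul, abs_of_nonneg (div_nonneg ha hR.le)]
  apply mul_le_mul_of_nonneg_left _ (div_nonneg ha hR.le)
  calc |mdist m z (x k) - mdist m y (x k)| ≤ mdist m z y := abs_mdist_sub_le m z y (x k)
    _ = mdist m y z := mdist_comm m z y

include hne hdec in
lemma hfun_bdd (y z : X) :
    BddAbove (Set.range fun k => |bump m p x k y - bump m p x k z|) := by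
  refine ⟨2 * mdist m (x 0) p, ?_⟩
  rintro r ⟨k, rfl⟩
  exact (bump_abs_le m p x hne k y z).trans (aval_le m p x hne hdec k)

include hne hdec in
lemma le_hfun (k : ℕ) (y z : X) :
    |bump m p x k y - bump m p x k z| ≤ hfun m p x y z :=
  le_ciSup (hfun_bdd m p x hne hdec y z) k

lemma hfun_le {B : ℝ} (hB : 0 ≤ B) {y z : X}
    (h : ∀ k, |bump m p x k y - bump m p x k z| ≤ B) : hfun m p x y z ≤ B :=
  Real.iSup_le h hB

include hne hdec in
lemma hfun_nonneg (y z : X) : 0 ≤ hfun m p x y z :=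
  le_trans (abs_nonneg _) (le_hfun m p x hne hdec 0 y z)

lemma hfun_self (y : X) : hfun m p x y y = 0 := by
  simp [hfun, ciSup_const]

lemma hfun_comm (y z : X) : hfun m p x y z = hfun m p x z y := by
  unfold hfun
  congr 1
  funext k
  exact abs_sub_comm _ _

include hne hdec in
lemma hfun_le2T0 (y z : X) : hfun m p x y z ≤ 2 * mdist m (x 0) p := by
  refine hfun_le m p x ?_ fun k => (bump_abs_le m p x hne k y z).trans
    (aval_le m p x hne hdec k)
  linarith [T_pos m p x hne 0]

include hne hdec in
lemma hfun_triangle (y z w : X) :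
    hfun m p x y w ≤ hfun m p x y z + hfun m p x z w := by
  refine hfun_le m p x
    (add_nonneg (hfun_nonneg m p x hne hdec y z) (hfun_nonneg m p x hne hdec z w))
    fun k => ?_
  calc |bump m p x k y - bump m p x k w|
      ≤ |bump m p x k y - bump m p x k z| + |bump m p x k z - bump m p x k w| :=
        abs_sub_le _ _ _
    _ ≤ hfun m p x y z + hfun m p x z w :=
        add_le_add (le_hfun m p x hne hdec k y z) (le_hfun m p x hne hdec k z w)

include hne hdec in
lemma hfun_block {n i j : ℕ} (hi : i < n) (hj : j < n) (hij : i ≠ j) :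
    hfun m p x (x (n * n + i)) (x (n * n + j)) = 2 * mdist m (x (n * n)) p := by
  have hsqrt : ∀ l < n, Nat.sqrt (n * n + l) = n := fun l hl =>
    Nat.sqrt_add_eq n (by omega)
  have havali : aval m p x (n * n + i) = 2 * mdist m (x (n * n)) p := by
    unfold aval; rw [hsqrt i hi]
  have havalj : aval m p x (n * n + j) = 2 * mdist m (x (n * n)) p := by
    unfold aval; rw [hsqrt j hj]
  have hij' : n * n + i ≠ n * n + j := by omega
  have hc : 0 ≤ 2 * mdist m (x (n * n)) p := by linarith [T_pos m p x hne (n * n)]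
  refine le_antisymm ?_ ?_
  · refine hfun_le m p x hc fun k => ?_
    rcases eq_or_ne k (n * n + i) with rfl | hki
    · rw [bump_self m p x hne, bump_ne m p x hne hdec hij'.symm, sub_zero,
        abs_of_nonneg (aval_pos m p x hne _).le, havali]
    · rcases eq_or_ne k (n * n + j) with rfl | hkj
      · rw [bump_self m p x hne, bump_ne m p x hne hdec hij', zero_sub, abs_neg,
          abs_of_nonneg (aval_pos m p x hne _).le, havalj]
      · rw [bump_ne m p x hne hdec hki.symm, bump_ne m p x hne hdec hkj.symm,
          sub_zero, abs_zero]
        exact hc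
  · have := le_hfun m p x hne hdec (n * n + i) (x (n * n + i)) (x (n * n + j))
    rw [bump_self m p x hne, bump_ne m p x hne hdec hij'.symm, sub_zero,
      abs_of_nonneg (aval_pos m p x hne _).le, havali] at this
    exact this

include hdec in
lemma T_le_pow (k : ℕ) : mdist m (x k) p ≤ mdist m (x 0) p / 4 ^ k := by
  induction k with
  | zero => simp
  | succ k ih =>
    have := hdec k
    have h4 : (0:ℝ) < 4 ^ k := by positivity
    calc mdist m (x (k + 1)) p ≤ mdist m (x k) p / 4 := (hdec k).le
      _ ≤ (mdist m (x 0) p / 4 ^ k) / 4 := by linarith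
      _ = mdist m (x 0) p / 4 ^ (k + 1) := by rw [div_div, ← pow_succ]

end Construction

/-- Recursively chosen sequence approaching `p`, with geometrically decaying distances. -/
noncomputable def buildSeq (m : MetricSpace X) (p : X)
    (F : ∀ s : ℝ, 0 < s → { y : X // y ≠ p ∧ mdist m y p < s }) (r8 : ℝ) (h8 : 0 < r8) :
    ℕ → { y : X // y ≠ p }
  | 0 => ⟨(F r8 h8).1, (F r8 h8).2.1⟩
  | (k + 1) =>
      let prev := buildSeq m p F r8 h8 k
      ⟨(F (mdist m prev.1 p / 4)
          (div_pos (mdist_pos m prev.2) (by norm_num))).1,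
        (F (mdist m prev.1 p / 4)
          (div_pos (mdist_pos m prev.2) (by norm_num))).2.1⟩

lemma buildSeq_zero (m : MetricSpace X) (p : X)
    (F : ∀ s : ℝ, 0 < s → { y : X // y ≠ p ∧ mdist m y p < s }) (r8 : ℝ) (h8 : 0 < r8) :
    mdist m (buildSeq m p F r8 h8 0).1 p < r8 := by
  simp only [buildSeq]
  exact (F r8 h8).2.2

lemma buildSeq_succ (m : MetricSpace X) (p : X)
    (F : ∀ s : ℝ, 0 < s → { y : X // y ≠ p ∧ mdist m y p < s }) (r8 : ℝ) (h8 : 0 < r8)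
    (k : ℕ) :
    mdist m (buildSeq m p F r8 h8 (k + 1)).1 p <
      mdist m (buildSeq m p F r8 h8 k).1 p / 4 := by
  simp only [buildSeq]
  exact (F _ _).2.2

/-- The key density step: near any compatible metric there is a non-doubling compatible
metric. -/
lemma exists_close_nondoubling [t : TopologicalSpace X] (m : MetricSpace X)
    (hm : m ∈ MetricsOn X) (p : X)
    (hp : ∀ s : ℝ, 0 < s → ∃ y, y ≠ p ∧ mdist m y p < s) (r : ℝ) (hr : 0 < r) :
    ∃ e : MetricSpace X, e ∈ MetricsOn X ∧
      (∀ u v, |mdist m u v - mdist e u v| ≤ r / 4) ∧ ¬IsDoublingMetric e := by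
  classical
  choose f hf1 hf2 using hp
  let F : ∀ s : ℝ, 0 < s → { y : X // y ≠ p ∧ mdist m y p < s } :=
    fun s hs => ⟨f s hs, hf1 s hs, hf2 s hs⟩
  have h8 : 0 < r / 8 := by linarith
  set x : ℕ → X := fun k => (buildSeq m p F (r / 8) h8 k).1 with hxdef
  have hne : ∀ k, x k ≠ p := fun k => (buildSeq m p F (r / 8) h8 k).2
  have h0 : mdist m (x 0) p < r / 8 := buildSeq_zero m p F (r / 8) h8
  have hdec : ∀ k, mdist m (x (k + 1)) p < mdist m (x k) p / 4 :=
    fun k => buildSeq_succ m p F (r / 8) h8 k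
  set ed : X → X → ℝ := fun u v => max (mdist m u v) (hfun m p x u v) with heddef
  have hT0 : 0 < mdist m (x 0) p := T_pos m p x hne 0
  have ed_self : ∀ u, ed u u = 0 := by
    intro u; simp [heddef, mdist_self, hfun_self]
  have ed_comm : ∀ u v, ed u v = ed v u := by
    intro u v; simp only [heddef]; rw [mdist_comm m u v, hfun_comm m p x u v]
  have ed_triangle : ∀ u v w, ed u w ≤ ed u v + ed v w := by
    intro u v w
    simp only [heddef]
    refine max_le ?_ ?_
    · calc mdist m u w ≤ mdist m u v + mdist m v w := mdist_triangle m u v w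
        _ ≤ _ := add_le_add (le_max_left _ _) (le_max_left _ _)
    · calc hfun m p x u w ≤ hfun m p x u v + hfun m p x v w :=
          hfun_triangle m p x hne hdec u v w
        _ ≤ _ := add_le_add (le_max_right _ _) (le_max_right _ _)
  have ed_eq : ∀ u v, ed u v = 0 → u = v := by
    intro u v h
    apply eq_of_mdist_eq_zero m
    have h1 : mdist m u v ≤ ed u v := le_max_left _ _
    have h2 : 0 ≤ mdist m u v := mdist_nonneg m u v
    linarith [h ▸ h1]
  have ed_ge : ∀ u v, mdist m u v ≤ ed u v := fun u v => le_max_left _ _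
  -- uniform continuity of the perturbation with respect to `m`
  have cont : ∀ (z : X) (ε : ℝ), 0 < ε → ∃ δ : ℝ, 0 < δ ∧ δ ≤ ε / 2 ∧
      ∀ y, mdist m z y < δ → hfun m p x z y ≤ ε / 2 := by
    intro z ε hε
    obtain ⟨n₀, hn₀⟩ := exists_pow_lt_of_lt_one
      (show (0:ℝ) < (ε / 4) / mdist m (x 0) p by positivity)
      (show (1/4 : ℝ) < 1 by norm_num)
    set N := n₀ + 1 with hN
    set M := N * N with hM
    have hTn : 2 * mdist m (x M) p < ε / 2 := by
      have h1 : mdist m (x n₀) p ≤ mdist m (x 0) p / 4 ^ n₀ := T_le_pow m p x hdec n₀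
      have h2 : mdist m (x 0) p / 4 ^ n₀ = mdist m (x 0) p * (1/4 : ℝ) ^ n₀ := by
        rw [one_div, inv_pow, div_eq_mul_inv]
      have h3 : mdist m (x 0) p * (1/4 : ℝ) ^ n₀ <
          mdist m (x 0) p * ((ε / 4) / mdist m (x 0) p) :=
        mul_lt_mul_of_pos_left hn₀ hT0
      have h4 : mdist m (x 0) p * ((ε / 4) / mdist m (x 0) p) = ε / 4 := by
        field_simp
      have h5 : n₀ ≤ M := by
        calc n₀ ≤ N := Nat.le_succ n₀
          _ ≤ N * N := Nat.le_mul_of_pos_left N (by omega)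
      have h6 : mdist m (x M) p ≤ mdist m (x n₀) p := T_anti m p x hne hdec h5
      linarith
    obtain ⟨L, hL0, hL⟩ := exists_bound
      (fun k => aval m p x k / (mdist m (x k) p / 4)) M
    have hL1 : 0 < L + 1 := by linarith
    refine ⟨min (ε / 2) ((ε / 2) / (L + 1)), lt_min (by linarith) (by positivity),
      min_le_left _ _, fun y hy => ?_⟩
    refine hfun_le m p x (by linarith) fun k => ?_
    by_cases hk : k < M
    · have hb := bump_lipschitz m p x hne k z y
      have h1 : aval m p x k / (mdist m (x k) p / 4) ≤ L := hL k hk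
      have hd0 : 0 ≤ mdist m z y := mdist_nonneg m z y
      have hdlt : mdist m z y ≤ (ε / 2) / (L + 1) :=
        (lt_of_lt_of_le hy (min_le_right _ _)).le
      have hc1 : aval m p x k / (mdist m (x k) p / 4) * mdist m z y ≤ L * mdist m z y :=
        mul_le_mul_of_nonneg_right h1 hd0
      have hc2 : L * mdist m z y ≤ L * ((ε / 2) / (L + 1)) :=
        mul_le_mul_of_nonneg_left hdlt hL0
      have hc3 : L * ((ε / 2) / (L + 1)) ≤ (L + 1) * ((ε / 2) / (L + 1)) :=
        mul_le_mul_of_nonneg_right (by linarith) (by positivity)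
      have hc4 : (L + 1) * ((ε / 2) / (L + 1)) = ε / 2 := by field_simp
      linarith
    · push_neg at hk
      have h1 := bump_abs_le m p x hne k z y
      have hs : N ≤ Nat.sqrt k := Nat.le_sqrt.2 hk
      have h5 : M ≤ Nat.sqrt k * Nat.sqrt k := Nat.mul_le_mul hs hs
      have h6 : mdist m (x (Nat.sqrt k * Nat.sqrt k)) p ≤ mdist m (x M) p :=
        T_anti m p x hne hdec h5
      have h2 : aval m p x k ≤ 2 * mdist m (x M) p := by
        unfold aval; linarith
      linarith
  -- openness criterion for the original metric
  have hopen_m : ∀ s : Set X, IsOpen s ↔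
      ∀ z ∈ s, ∃ ε > 0, ∀ y, mdist m z y < ε → y ∈ s := by
    intro s
    rw [← hm, @Metric.isOpen_iff X m.toPseudoMetricSpace s]
    refine forall₂_congr fun z hz => exists_congr fun ε => and_congr_right fun hε => ?_
    constructor
    · intro hball y hy
      apply hball
      show @dist X m.toPseudoMetricSpace.toDist y z < ε
      have : @dist X m.toPseudoMetricSpace.toDist y z = mdist m z y := mdist_comm m y z
      rw [this]; exact hy
    · intro h y hy
      apply h
      have : @dist X m.toPseudoMetricSpace.toDist y z = mdist m z y := mdist_comm m y z
      rw [← this]; exact hy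
  have HE : ∀ s : Set X, IsOpen s ↔ ∀ z ∈ s, ∃ ε > 0, ∀ y, ed z y < ε → y ∈ s := by
    intro s
    rw [hopen_m s]
    refine forall₂_congr fun z hz => ?_
    constructor
    · rintro ⟨ε, hε, h⟩
      exact ⟨ε, hε, fun y hy => h y ((ed_ge z y).trans_lt hy)⟩
    · rintro ⟨ε, hε, h⟩
      obtain ⟨δ, hδ0, hδε, hδ⟩ := cont z ε hε
      refine ⟨δ, hδ0, fun y hy => h y ?_⟩
      have h1 : hfun m p x z y ≤ ε / 2 := hδ y hy
      have h2 : mdist m z y < ε := by linarith [lt_of_lt_of_le hy hδε]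
      exact max_lt h2 (by linarith)
  refine ⟨MetricSpace.ofDistTopology ed ed_self ed_comm ed_triangle HE ed_eq, rfl,
    ?_, ?_⟩
  · intro u v
    have hEd : mdist (MetricSpace.ofDistTopology ed ed_self ed_comm ed_triangle HE ed_eq)
        u v = ed u v := rfl
    rw [hEd, abs_sub_comm, abs_of_nonneg (sub_nonneg.2 (ed_ge u v))]
    have h1 : ed u v ≤ mdist m u v + hfun m p x u v :=
      max_le (le_add_of_nonneg_right (hfun_nonneg m p x hne hdec u v))
        (le_add_of_nonneg_left (mdist_nonneg m u v))
    have h2 : hfun m p x u v ≤ 2 * mdist m (x 0) p := hfun_le2T0 m p x hne hdec u v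
    linarith
  · rintro ⟨C, hC, α, hα, hdb⟩
    obtain ⟨n₁, hn₁⟩ := exists_nat_gt C
    set n := max n₁ 2 with hn
    have hn2 : 2 ≤ n := le_max_right _ _
    have hCn : C < (n : ℝ) := by
      refine hn₁.trans_le ?_
      exact_mod_cast Nat.le_max_left n₁ 2
    set c := 2 * mdist m (x (n * n)) p with hc
    have hcpos : 0 < c := by
      have := T_pos m p x hne (n * n); simp only [hc]; linarith
    have hinj : Function.Injective x := x_inj m p x hne hdec
    set A : Finset X := (Finset.range n).image (fun i => x (n * n + i)) with hA
    have hcard : A.card = n := by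
      rw [hA, Finset.card_image_of_injective _ (fun i j hij => by
        have := hinj hij; omega), Finset.card_range]
    have hmem : ∀ u ∈ A, ∃ i, i < n ∧ u = x (n * n + i) := by
      intro u hu
      rw [hA, Finset.mem_image] at hu
      obtain ⟨i, hi, rfl⟩ := hu
      exact ⟨i, Finset.mem_range.1 hi, rfl⟩
    have hconst : ∀ u ∈ A, ∀ v ∈ A, u ≠ v →
        mdist (MetricSpace.ofDistTopology ed ed_self ed_comm ed_triangle HE ed_eq) u v
          = c := by
      intro u hu v hv huv
      obtain ⟨i, hi, rfl⟩ := hmem u hu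
      obtain ⟨j, hj, rfl⟩ := hmem v hv
      have hij : i ≠ j := fun h => huv (by rw [h])
      show ed (x (n * n + i)) (x (n * n + j)) = c
      have hhf : hfun m p x (x (n * n + i)) (x (n * n + j)) = c :=
        hfun_block m p x hne hdec hi hj hij
      simp only [heddef]
      rw [hhf]
      apply max_eq_right
      have ht1 : mdist m (x (n * n + i)) (x (n * n + j)) ≤
          mdist m (x (n * n + i)) p + mdist m p (x (n * n + j)) :=
        mdist_triangle m _ p _
      have ht2 : mdist m p (x (n * n + j)) = mdist m (x (n * n + j)) p := mdist_comm m _ _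
      have ht3 : mdist m (x (n * n + i)) p ≤ mdist m (x (n * n)) p :=
        T_anti m p x hne hdec (Nat.le_add_right _ _)
      have ht4 : mdist m (x (n * n + j)) p ≤ mdist m (x (n * n)) p :=
        T_anti m p x hne hdec (Nat.le_add_right _ _)
      simp only [hc]
      linarith
    have h1lt : 1 < A.card := by omega
    have hdiam := setDiam_const _ hcpos.le h1lt hconst
    have hsep := setSep_const _ h1lt hconst
    have hfin := hdb A (by omega)
    rw [hdiam, hsep, div_self (ne_of_gt hcpos), Real.one_rpow, mul_one, hcard] at hfin
    linarith

end NonDoublingAux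

theorem non_doubling_dense_Gdelta (X : Type*) [TopologicalSpace X]
    [TopologicalSpace.MetrizableSpace X] (hX : ¬DiscreteTopology X) :
    Dense { d : Met X | ¬IsDoublingMetric d.1 } ∧
    IsGδ { d : Met X | ¬IsDoublingMetric d.1 } := by
  classical
  open NonDoublingAux in
  obtain ⟨p, hp⟩ : ∃ p : X, ¬IsOpen ({p} : Set X) := by
    by_contra h
    push_neg at h
    exact hX (discreteTopology_iff_isOpen_singleton.2 h)
  set U : ℕ → Set (Met X) := fun n =>
    { d : Met X | ∃ A : Finset X, 2 ≤ A.card ∧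
        ((n : ℝ) + 1) * (setDiam d.1 ↑A / setSep d.1 ↑A) ^ ((n : ℝ) + 1) < (A.card : ℝ) }
    with hU
  have hU_eq : { d : Met X | ¬IsDoublingMetric d.1 } = ⋂ n, U n := by
    ext d
    simp only [Set.mem_iInter, Set.mem_setOf_eq, hU]
    constructor
    · intro hnd n
      by_contra hno
      apply hnd
      refine ⟨(n : ℝ) + 1, by positivity, (n : ℝ) + 1, by positivity, fun A hA => ?_⟩
      by_contra hlt
      push_neg at hlt
      exact hno ⟨A, hA, hlt⟩
    · rintro h ⟨C, hC, α, hα, hdb⟩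
      obtain ⟨n, hn⟩ := exists_nat_ge (max C α)
      obtain ⟨A, hA2, hAlt⟩ := h n
      have h1card : 1 < A.card := by omega
      have hsp := NonDoublingAux.setSep_pos d.1 h1card
      have hbase : 1 ≤ setDiam d.1 ↑A / setSep d.1 ↑A :=
        (one_le_div hsp).2 (NonDoublingAux.setSep_le_setDiam d.1 h1card)
      have h1 : C ≤ (n : ℝ) + 1 := le_trans (le_max_left C α) (hn.trans (by linarith))
      have h2 : (setDiam d.1 ↑A / setSep d.1 ↑A) ^ α ≤
          (setDiam d.1 ↑A / setSep d.1 ↑A) ^ ((n : ℝ) + 1) :=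
        Real.rpow_le_rpow_of_exponent_le hbase
          (le_trans (le_max_right C α) (hn.trans (by linarith)))
      have h3 := hdb A hA2
      have h4 : C * (setDiam d.1 ↑A / setSep d.1 ↑A) ^ α ≤
          ((n : ℝ) + 1) * (setDiam d.1 ↑A / setSep d.1 ↑A) ^ ((n : ℝ) + 1) :=
        mul_le_mul h1 h2 (Real.rpow_nonneg (by linarith) α) (by positivity)
      linarith
  have hUopen : ∀ n, IsOpen (U n) := by
    intro n
    apply NonDoublingAux.met_isOpen_of
    rintro d ⟨A, hA2, hAlt⟩
    have h1card : 1 < A.card := by omega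
    set δ0 := setDiam d.1 ↑A with hδ0def
    set α0 := setSep d.1 ↑A with hα0def
    have hα0 : 0 < α0 := NonDoublingAux.setSep_pos d.1 h1card
    have hδ0 : 0 ≤ δ0 := NonDoublingAux.setDiam_nonneg d.1 ↑A
    have hcont : ContinuousAt
        (fun s : ℝ => ((n : ℝ) + 1) * ((δ0 + s) / (α0 - s)) ^ ((n : ℝ) + 1)) 0 := by
      have hbase : ContinuousAt (fun s : ℝ => (δ0 + s) / (α0 - s)) 0 :=
        ContinuousAt.div (by fun_prop) (by fun_prop) (by simpa using hα0.ne')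
      have hpow : ContinuousAt (fun y : ℝ => y ^ ((n : ℝ) + 1))
          ((fun s : ℝ => (δ0 + s) / (α0 - s)) 0) := by
        exact Real.continuousAt_rpow_const _ _ (Or.inr (by positivity))
      exact (ContinuousAt.comp (x := (0:ℝ)) (f := fun s : ℝ => (δ0 + s) / (α0 - s)) hpow
        hbase).const_mul _
    have hval : ((n : ℝ) + 1) * ((δ0 + 0) / (α0 - 0)) ^ ((n : ℝ) + 1) < (A.card : ℝ) := by
      simpa using hAlt
    have hev : ∀ᶠ s in nhds (0 : ℝ),
        ((n : ℝ) + 1) * ((δ0 + s) / (α0 - s)) ^ ((n : ℝ) + 1) < (A.card : ℝ) :=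
      Filter.Tendsto.eventually_lt_const hval hcont
    rw [Metric.eventually_nhds_iff] at hev
    obtain ⟨ε, hε, hevb⟩ := hev
    set s0 := min (ε / 2) (α0 / 2) with hs0
    have hs0pos : 0 < s0 := lt_min (by linarith) (by linarith)
    refine ⟨ENNReal.ofReal s0, ENNReal.ofReal_pos.2 hs0pos, fun e he => ?_⟩
    have hpt : ∀ u v, |mdist d.1 u v - mdist e.1 u v| ≤ s0 :=
      fun u v => (NonDoublingAux.metD_lt_real hs0pos he u v).le
    have hδe : setDiam e.1 ↑A ≤ δ0 + s0 :=
      NonDoublingAux.setDiam_le_add d.1 e.1 A hs0pos.le hpt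
    have hαe : α0 - s0 ≤ setSep e.1 ↑A :=
      NonDoublingAux.setSep_sub_le d.1 e.1 h1card hpt
    have hαe0 : 0 < α0 - s0 := by
      have := min_le_right (ε / 2) (α0 / 2)
      have : s0 ≤ α0 / 2 := by rw [hs0]; exact min_le_right _ _
      linarith
    have hfs0 : ((n : ℝ) + 1) * ((δ0 + s0) / (α0 - s0)) ^ ((n : ℝ) + 1) < (A.card : ℝ) := by
      apply hevb
      rw [Real.dist_eq, sub_zero, abs_of_pos hs0pos]
      have : s0 ≤ ε / 2 := by rw [hs0]; exact min_le_left _ _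
      linarith
    refine ⟨A, hA2, lt_of_le_of_lt ?_ hfs0⟩
    have hdivle : setDiam e.1 ↑A / setSep e.1 ↑A ≤ (δ0 + s0) / (α0 - s0) :=
      div_le_div₀ (by linarith) hδe hαe0 hαe
    have hnum : 0 ≤ setDiam e.1 ↑A / setSep e.1 ↑A :=
      div_nonneg (NonDoublingAux.setDiam_nonneg e.1 ↑A)
        (le_trans hαe0.le hαe)
    exact mul_le_mul_of_nonneg_left
      (Real.rpow_le_rpow hnum hdivle (by positivity)) (by positivity)
  constructor
  · rw [dense_iff_inter_open]
    rintro V hV ⟨d, hd⟩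
    obtain ⟨ε, hε, hball⟩ := NonDoublingAux.met_exists_ball hV hd
    obtain ⟨r, hr, hrε⟩ : ∃ r : ℝ, 0 < r ∧ ENNReal.ofReal r ≤ ε := by
      rcases eq_or_ne ε ⊤ with rfl | hεne
      · exact ⟨1, one_pos, le_top⟩
      · exact ⟨ε.toReal, ENNReal.toReal_pos hε.ne' hεne,
          (ENNReal.ofReal_toReal hεne).le⟩
    have hp' : ∀ s : ℝ, 0 < s → ∃ y, y ≠ p ∧ mdist d.1 y p < s := by
      have hp2 := hp
      rw [← d.2] at hp2
      rw [@Metric.isOpen_singleton_iff X d.1.toPseudoMetricSpace p] at hp2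
      push_neg at hp2
      intro s hs
      obtain ⟨y, hy1, hy2⟩ := hp2 s hs
      exact ⟨y, hy2, hy1⟩
    obtain ⟨e, heM, hbound, hend⟩ :=
      NonDoublingAux.exists_close_nondoubling d.1 d.2 p hp' r hr
    refine ⟨⟨e, heM⟩, hball _ ?_, hend⟩
    calc metD d.1 e ≤ ENNReal.ofReal (r / 4) := NonDoublingAux.metD_le_real hbound
      _ < ENNReal.ofReal r := (ENNReal.ofReal_lt_ofReal_iff hr).2 (by linarith)
      _ ≤ ε := hrε
  · rw [hU_eq]
    exact IsGδ.iInter fun n => (hUopen n).isGδ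
end

section
/- Let X be a non-discrete metrizable topological space. Then the set of all d ∈ Met(X) such that the metric space (X, d) is not uniformly disconnected is a dense G_δ subset of Met(X). -/
open scoped ENNReal

/-- A metric space is uniformly disconnected if there is `δ ∈ (0,1)` such that any finite
sequence `z_0, …, z_N` with `d(z_i, z_{i+1}) < δ · d(z_0, z_N)` for all `i` has exactly one
term (`N = 0`). -/
def IsUniformlyDisconnected {X : Type*} (m : MetricSpace X) : Prop :=
  ∃ δ : ℝ, 0 < δ ∧ δ < 1 ∧ ∀ (N : ℕ) (z : Fin (N + 1) → X),
    (∀ i : Fin N, mdist m (z i.castSucc) (z i.succ) < δ * mdist m (z 0) (z (Fin.last N))) →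
    N = 0


namespace NonUD

open Topology

variable {X : Type*}

theorem mdist_nonneg (m : MetricSpace X) (x y : X) : 0 ≤ mdist m x y := by
  letI := m; exact dist_nonneg

theorem mdist_comm (m : MetricSpace X) (x y : X) : mdist m x y = mdist m y x := by
  letI := m; exact dist_comm x y

theorem mdist_triangle (m : MetricSpace X) (x y z : X) :
    mdist m x z ≤ mdist m x y + mdist m y z := by
  letI := m; exact dist_triangle x y z

theorem mdist_self (m : MetricSpace X) (x : X) : mdist m x x = 0 := by
  letI := m; exact dist_self x

theorem mdist_pos (m : MetricSpace X) {x y : X} (h : x ≠ y) : 0 < mdist m x y := by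
  letI := m; exact dist_pos.2 h

theorem mdist_eq_zero (m : MetricSpace X) {x y : X} (h : mdist m x y = 0) : x = y := by
  letI := m; exact eq_of_dist_eq_zero h

theorem metD_self (d : MetricSpace X) : metD d d = 0 := by
  simp [metD]

theorem metD_triangle (a b c : MetricSpace X) : metD a c ≤ metD a b + metD b c := by
  simp only [metD]
  refine iSup_le fun w => ?_
  calc ENNReal.ofReal |mdist a w.1 w.2 - mdist c w.1 w.2|
      ≤ ENNReal.ofReal (|mdist a w.1 w.2 - mdist b w.1 w.2| + |mdist b w.1 w.2 - mdist c w.1 w.2|) :=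
        ENNReal.ofReal_le_ofReal (abs_sub_le _ _ _)
    _ ≤ ENNReal.ofReal |mdist a w.1 w.2 - mdist b w.1 w.2|
        + ENNReal.ofReal |mdist b w.1 w.2 - mdist c w.1 w.2| := ENNReal.ofReal_add_le
    _ ≤ _ := add_le_add
        (le_iSup (fun p : X × X => ENNReal.ofReal |mdist a p.1 p.2 - mdist b p.1 p.2|) w)
        (le_iSup (fun p : X × X => ENNReal.ofReal |mdist b p.1 p.2 - mdist c p.1 p.2|) w)

theorem pointwise_of_metD_lt {d e : MetricSpace X} {c : ℝ} (h : metD d e < ENNReal.ofReal c)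
    (x y : X) : |mdist d x y - mdist e x y| < c := by
  have h1 : ENNReal.ofReal |mdist d x y - mdist e x y| < ENNReal.ofReal c :=
    lt_of_le_of_lt (le_iSup (fun w : X × X => ENNReal.ofReal |mdist d w.1 w.2 - mdist e w.1 w.2|)
      (x, y)) h
  have hc : 0 < c := by
    by_contra hc
    push_neg at hc
    rw [ENNReal.ofReal_eq_zero.2 hc] at h1
    simp at h1
  rwa [ENNReal.ofReal_lt_ofReal_iff hc] at h1

theorem metD_le_ofReal {d e : MetricSpace X} {c : ℝ}
    (h : ∀ x y, |mdist d x y - mdist e x y| ≤ c) : metD d e ≤ ENNReal.ofReal c :=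
  iSup_le fun w => ENNReal.ofReal_le_ofReal (h w.1 w.2)

theorem isOpen_metD_ball [TopologicalSpace X] (d : Met X) {ε : ℝ≥0∞} (hε : 0 < ε) :
    IsOpen {e : Met X | metD d.1 e.1 < ε} :=
  TopologicalSpace.isOpen_generateFrom_of_mem ⟨d, ε, hε, rfl⟩

theorem exists_ball_subset [TopologicalSpace X] {U : Set (Met X)} (hU : IsOpen U) :
    ∀ d, d ∈ U → ∃ ε : ℝ≥0∞, 0 < ε ∧ {e : Met X | metD d.1 e.1 < ε} ⊆ U := by
  have hU' : TopologicalSpace.GenerateOpen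
      { V | ∃ (d : Met X) (ε : ℝ≥0∞), 0 < ε ∧ V = { e : Met X | metD d.1 e.1 < ε } } U := hU
  clear hU
  induction hU' with
  | basic s hs =>
    obtain ⟨d₀, ε₀, hε₀, rfl⟩ := hs
    intro d hd
    refine ⟨ε₀ - metD d₀.1 d.1, tsub_pos_of_lt hd, fun e he => ?_⟩
    have h1 : metD d₀.1 e.1 ≤ metD d₀.1 d.1 + metD d.1 e.1 := metD_triangle _ _ _
    have h2 : metD d₀.1 d.1 + metD d.1 e.1 < metD d₀.1 d.1 + (ε₀ - metD d₀.1 d.1) :=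
      ENNReal.add_lt_add_left (ne_top_of_lt hd) he
    rw [add_tsub_cancel_of_le hd.le] at h2
    exact lt_of_le_of_lt h1 h2
  | univ => exact fun d _ => ⟨1, zero_lt_one, Set.subset_univ _⟩
  | inter s t _ _ ihs iht =>
    intro d hd
    obtain ⟨ε₁, hε₁, h₁⟩ := ihs d hd.1
    obtain ⟨ε₂, hε₂, h₂⟩ := iht d hd.2
    refine ⟨min ε₁ ε₂, lt_min hε₁ hε₂, fun e he => ⟨h₁ ?_, h₂ ?_⟩⟩
    · have he' : metD d.1 e.1 < min ε₁ ε₂ := he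
      exact lt_of_lt_of_le he' (min_le_left _ _)
    · have he' : metD d.1 e.1 < min ε₁ ε₂ := he
      exact lt_of_lt_of_le he' (min_le_right _ _)
  | sUnion S _ ih =>
    rintro d ⟨s, hsS, hds⟩
    obtain ⟨ε, hε, h⟩ := ih s hsS d hds
    exact ⟨ε, hε, h.trans (Set.subset_sUnion_of_mem hsS)⟩

theorem isOpen_iff_of_mdist (m : MetricSpace X) (s : Set X) :
    IsOpen[m.toUniformSpace.toTopologicalSpace] s ↔
      ∀ x ∈ s, ∃ ε > 0, ∀ y, mdist m x y < ε → y ∈ s := by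
  letI := m
  refine Iff.trans Metric.isOpen_iff ?_
  constructor
  · rintro H x hx
    obtain ⟨ε, hε, hb⟩ := H x hx
    refine ⟨ε, hε, fun y hy => hb ?_⟩
    rw [Metric.mem_ball, dist_comm]
    exact hy
  · rintro H x hx
    obtain ⟨ε, hε, hb⟩ := H x hx
    refine ⟨ε, hε, fun y hy => hb y ?_⟩
    rw [Metric.mem_ball, dist_comm] at hy
    exact hy

theorem exists_acc [t : TopologicalSpace X] (hX : ¬DiscreteTopology X) (m : MetricSpace X)
    (hm : m ∈ MetricsOn X) : ∃ p : X, ∀ r : ℝ, 0 < r → ∃ x, x ≠ p ∧ mdist m x p < r := by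
  by_contra h
  push_neg at h
  apply hX
  rw [discreteTopology_iff_isOpen_singleton]
  intro a
  obtain ⟨r, hr, hra⟩ := h a
  have key : IsOpen[m.toUniformSpace.toTopologicalSpace] ({a} : Set X) := by
    rw [isOpen_iff_of_mdist]
    intro x hx
    rw [Set.mem_singleton_iff] at hx
    subst hx
    refine ⟨r, hr, fun y hy => ?_⟩
    by_contra hya
    rw [Set.mem_singleton_iff] at hya
    have := hra y hya
    rw [mdist_comm] at hy
    linarith
  have hmt : m.toUniformSpace.toTopologicalSpace = t := hm
  rwa [hmt] at key

/-! ### The perturbation construction -/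

structure Pack (X : Type*) where
  m : MetricSpace X
  p : X
  c : ℝ
  hc : 0 < c
  hp : ∀ r : ℝ, 0 < r → ∃ x : X, x ≠ p ∧ mdist m x p < r

namespace Pack

variable {X : Type*} (P : Pack X)

noncomputable def pick (r : ℝ) : X :=
  if h : 0 < r then (P.hp r h).choose else (P.hp 1 one_pos).choose

theorem pick_ne (r : ℝ) : P.pick r ≠ P.p := by
  unfold pick
  split
  · exact (P.hp r ‹_›).choose_spec.1
  · exact (P.hp 1 one_pos).choose_spec.1

theorem pick_lt {r : ℝ} (h : 0 < r) : mdist P.m (P.pick r) P.p < r := by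
  unfold pick
  rw [dif_pos h]
  exact (P.hp r h).choose_spec.2

noncomputable def pt (k : ℕ) : X :=
  Nat.rec (P.pick (P.c / 4)) (fun _ prev => P.pick (mdist P.m prev P.p / 4)) k

theorem pt_zero : P.pt 0 = P.pick (P.c / 4) := rfl

theorem pt_succ (k : ℕ) : P.pt (k + 1) = P.pick (mdist P.m (P.pt k) P.p / 4) := rfl

theorem pt_ne (k : ℕ) : P.pt k ≠ P.p := by
  cases k
  · rw [pt_zero]; exact P.pick_ne _
  · rw [pt_succ]; exact P.pick_ne _

noncomputable def rr (k : ℕ) : ℝ := mdist P.m (P.pt k) P.p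

theorem rr_def (k : ℕ) : P.rr k = mdist P.m (P.pt k) P.p := rfl

theorem rr_pos (k : ℕ) : 0 < P.rr k := mdist_pos _ (P.pt_ne k)

theorem rr_succ (k : ℕ) : P.rr (k + 1) < P.rr k / 4 := by
  have h : 0 < mdist P.m (P.pt k) P.p / 4 := by
    have := P.rr_pos k
    rw [rr_def] at this
    linarith
  have := P.pick_lt h
  rw [rr_def]
  rw [P.pt_succ k]
  exact this

theorem rr_zero : P.rr 0 < P.c / 4 := by
  have h : 0 < P.c / 4 := by linarith [P.hc]
  have := P.pick_lt h
  rw [rr_def, P.pt_zero]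
  exact this

theorem rr_anti : Antitone P.rr := by
  apply antitone_nat_of_succ_le
  intro k
  have h1 := P.rr_succ k
  have h2 := P.rr_pos k
  linarith

theorem rr_quarter {j k : ℕ} (h : j < k) : P.rr k ≤ P.rr j / 4 :=
  (P.rr_anti h).trans (P.rr_succ j).le

theorem rr_lt_c (k : ℕ) : P.rr k < P.c / 4 :=
  lt_of_le_of_lt (P.rr_anti (Nat.zero_le k)) P.rr_zero

theorem rr_pow (k : ℕ) : P.rr k ≤ P.rr 0 * (1 / 4) ^ k := by
  induction k with
  | zero => simp
  | succ k ih =>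
    have h1 := P.rr_succ k
    have h2 : (0:ℝ) < (1/4) ^ k := by positivity
    calc P.rr (k+1) ≤ P.rr k / 4 := h1.le
      _ ≤ (P.rr 0 * (1/4)^k) / 4 := by linarith
      _ = P.rr 0 * (1/4)^(k+1) := by ring

theorem rr_small {ε : ℝ} (hε : 0 < ε) : ∃ K, P.rr K < ε := by
  obtain ⟨K, hK⟩ := exists_pow_lt_of_lt_one (div_pos hε (P.rr_pos 0))
    (show (1/4 : ℝ) < 1 by norm_num)
  refine ⟨K, lt_of_le_of_lt (P.rr_pow K) ?_⟩
  have h0 := P.rr_pos 0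
  calc P.rr 0 * (1/4)^K < P.rr 0 * (ε / P.rr 0) := by
        exact mul_lt_mul_of_pos_left hK h0
    _ = ε := by field_simp

theorem pt_sep (j k : ℕ) : P.rr j - P.rr k ≤ mdist P.m (P.pt j) (P.pt k) := by
  have := mdist_triangle P.m (P.pt j) (P.pt k) P.p
  rw [← rr_def, ← rr_def] at this
  linarith

/-! ### The weight sequence ψ -/

noncomputable def CC (n : ℕ) : ℝ := P.rr (2 ^ (n + 1) - 2)

theorem CC_pos (n : ℕ) : 0 < P.CC n := P.rr_pos _

noncomputable def psi (k : ℕ) : ℝ :=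
  (P.CC (Nat.log 2 (k + 1)) / 4) *
    (1 - ((k : ℝ) + 1 - 2 ^ Nat.log 2 (k + 1)) / 2 ^ (Nat.log 2 (k + 1) + 1))

theorem decomp (k : ℕ) : ∃ n i, i < 2 ^ n ∧ k = 2 ^ n - 1 + i := by
  have h1 := Nat.pow_log_le_self 2 (show k + 1 ≠ 0 by omega)
  have h2 := Nat.lt_pow_succ_log_self (show 1 < 2 by norm_num) (k + 1)
  rw [pow_succ] at h2
  exact ⟨Nat.log 2 (k + 1), k + 1 - 2 ^ Nat.log 2 (k + 1), by omega, by omega⟩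

theorem psi_block {n i : ℕ} (hi : i < 2 ^ n) :
    P.psi (2 ^ n - 1 + i) = (P.CC n / 4) * (1 - (i : ℝ) / 2 ^ (n + 1)) := by
  have h1 : (1:ℕ) ≤ 2 ^ n := Nat.one_le_two_pow
  have hk : (2 ^ n - 1 + i) + 1 = 2 ^ n + i := by omega
  have hlog : Nat.log 2 ((2 ^ n - 1 + i) + 1) = n := by
    rw [hk]
    refine Nat.log_eq_of_pow_le_of_lt_pow (Nat.le_add_right _ _) ?_
    rw [pow_succ]
    omega
  have hcast : ((2 ^ n - 1 + i : ℕ) : ℝ) + 1 - (2:ℝ) ^ n = i := by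
    push_cast [h1]
    ring
  unfold psi
  rw [hlog, hcast]

theorem psi_pos (k : ℕ) : 0 < P.psi k := by
  obtain ⟨n, i, hi, rfl⟩ := decomp k
  rw [P.psi_block hi]
  have h1 : (i : ℝ) < 2 ^ (n + 1) := by
    have ha : (i:ℝ) < 2^n := by exact_mod_cast hi
    have hb : (0:ℝ) < 2^n := by positivity
    have hc : (2:ℝ)^(n+1) = 2^n * 2 := pow_succ 2 n
    nlinarith
  have h2 : (0:ℝ) < 2 ^ (n + 1) := by positivity
  have h3 : (i : ℝ) / 2 ^ (n + 1) < 1 := by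
    rw [div_lt_one h2]; exact h1
  have h4 := P.CC_pos n
  nlinarith

theorem psi_le (k : ℕ) : P.psi k ≤ P.rr k / 4 := by
  obtain ⟨n, i, hi, rfl⟩ := decomp k
  rw [P.psi_block hi]
  have h1 : (1:ℕ) ≤ 2 ^ n := Nat.one_le_two_pow
  have hle : 2 ^ n - 1 + i ≤ 2 ^ (n + 1) - 2 := by
    rw [pow_succ]; omega
  have h2 : P.CC n ≤ P.rr (2 ^ n - 1 + i) := P.rr_anti hle
  have h3 : (0:ℝ) ≤ (i : ℝ) / 2 ^ (n + 1) := by positivity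
  have h4 := P.CC_pos n
  nlinarith

theorem psi_half {n i : ℕ} (hi : i < 2 ^ n) :
    P.CC n / 8 ≤ P.psi (2 ^ n - 1 + i) := by
  rw [P.psi_block hi]
  have h1 : (i : ℝ) + 1 ≤ 2 ^ n := by exact_mod_cast hi
  have h2 : (0:ℝ) < 2 ^ (n + 1) := by positivity
  have h3 : (2:ℝ) ^ (n + 1) = 2 * 2 ^ n := by rw [pow_succ]; ring
  have h4 : (i : ℝ) / 2 ^ (n + 1) ≤ 1 / 2 := by
    rw [div_le_iff₀ h2]
    nlinarith
  have h5 := P.CC_pos n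
  nlinarith

theorem psi_strictAnti : StrictAnti P.psi := by
  apply strictAnti_nat_of_succ_lt
  intro k
  obtain ⟨n, i, hi, rfl⟩ := decomp k
  by_cases hii : i + 1 < 2 ^ n
  · have hsucc : (2 ^ n - 1 + i) + 1 = 2 ^ n - 1 + (i + 1) := by omega
    rw [hsucc, P.psi_block hi, P.psi_block hii]
    have h2 : (0:ℝ) < 2 ^ (n + 1) := by positivity
    have h5 := P.CC_pos n
    have h6 : ((i:ℝ) + 1) / 2 ^ (n + 1) = (i:ℝ) / 2 ^ (n+1) + 1 / 2 ^ (n+1) := by ring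
    have h7 : (0:ℝ) < 1 / 2 ^ (n + 1) := by positivity
    push_cast
    nlinarith
  · have h1 : (1:ℕ) ≤ 2 ^ n := Nat.one_le_two_pow
    have hieq : i + 1 = 2 ^ n := by omega
    have hsucc : (2 ^ n - 1 + i) + 1 = 2 ^ (n + 1) - 1 + 0 := by rw [pow_succ]; omega
    rw [hsucc, P.psi_block (show 0 < 2 ^ (n+1) by positivity)]
    have hlow := P.psi_half hi
    have hCC1 : P.CC (n + 1) ≤ P.rr (2 ^ (n + 1) - 1) := by
      apply P.rr_anti
      have : (2:ℕ) ≤ 2 ^ (n+1) := by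
        calc (2:ℕ) = 2^1 := rfl
          _ ≤ 2^(n+1) := Nat.pow_le_pow_right (by norm_num) (by omega)
      rw [pow_succ]
      omega
    have hCC2 : P.rr (2 ^ (n + 1) - 1) < P.rr (2 ^ (n + 1) - 2) / 4 := by
      have h2 : (2:ℕ) ≤ 2 ^ (n+1) := by
        calc (2:ℕ) = 2^1 := rfl
          _ ≤ 2^(n+1) := Nat.pow_le_pow_right (by norm_num) (by omega)
      have := P.rr_succ (2 ^ (n + 1) - 2)
      rwa [show 2 ^ (n + 1) - 2 + 1 = 2 ^ (n + 1) - 1 by omega] at this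
    have hCCn : P.rr (2 ^ (n + 1) - 2) = P.CC n := rfl
    have h5 := P.CC_pos n
    have h6 := P.CC_pos (n + 1)
    rw [hCCn] at hCC2
    push_cast
    norm_num
    linarith

/-! ### The set `A = {p} ∪ {ptₖ}` with weights -/

noncomputable def qq : Option ℕ → X
  | none => P.p
  | some k => P.pt k

noncomputable def phi : Option ℕ → ℝ
  | none => 0
  | some k => P.psi k

theorem qq_none : P.qq none = P.p := rfl
theorem qq_some (k : ℕ) : P.qq (some k) = P.pt k := rfl
theorem phi_none : P.phi none = 0 := rfl
theorem phi_some (k : ℕ) : P.phi (some k) = P.psi k := rfl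

theorem phi_nonneg (a : Option ℕ) : 0 ≤ P.phi a := by
  cases a
  · exact le_refl _
  · exact (P.psi_pos _).le

theorem psi_le_sep {k j : ℕ} (h : k < j) : P.psi k ≤ P.rr k / 4 → True := fun _ => trivial

theorem phi_lip (a b : Option ℕ) : P.phi a - P.phi b ≤ mdist P.m (P.qq a) (P.qq b) := by
  cases a with
  | none =>
    have := mdist_nonneg P.m (P.qq none) (P.qq b)
    have := P.phi_nonneg b
    rw [phi_none]
    linarith
  | some k =>
    cases b with
    | none =>
      rw [phi_some, phi_none, qq_some, qq_none, ← rr_def]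
      have h1 := P.psi_le k
      have h2 := P.rr_pos k
      linarith
    | some j =>
      rw [phi_some, phi_some, qq_some, qq_some]
      rcases lt_trichotomy k j with h | h | h
      · -- k < j : ψ k ≤ rr k / 4 ≤ rr k − rr j ≤ d(pt k, pt j)
        have h1 := P.psi_le k
        have h2 := P.rr_quarter h
        have h3 := P.pt_sep k j
        have h4 := P.rr_pos k
        have h5 := P.psi_pos j
        linarith
      · subst h
        have := mdist_nonneg P.m (P.pt k) (P.pt k)
        linarith
      · have h1 := P.psi_strictAnti h
        have h2 := mdist_nonneg P.m (P.pt k) (P.pt j)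
        linarith

theorem phi_abs (a b : Option ℕ) : |P.phi a - P.phi b| ≤ mdist P.m (P.qq a) (P.qq b) := by
  rw [abs_sub_le_iff]
  constructor
  · exact P.phi_lip a b
  · rw [mdist_comm]
    exact P.phi_lip b a

theorem phi_injective : Function.Injective P.phi := by
  intro a b hab
  cases a with
  | none =>
    cases b with
    | none => rfl
    | some j => exact absurd hab.symm (ne_of_gt (P.psi_pos j))
  | some k =>
    cases b with
    | none => exact absurd hab (ne_of_gt (P.psi_pos k))
    | some j => exact congrArg some (P.psi_strictAnti.injective hab)

/-! ### distance to `A` and the weight function -/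

noncomputable def DA (x : X) : ℝ := ⨅ a : Option ℕ, mdist P.m x (P.qq a)

noncomputable def Psi (x : X) : ℝ := ⨅ a : Option ℕ, (P.phi a + mdist P.m x (P.qq a))

theorem DA_bdd (x : X) : BddBelow (Set.range fun a : Option ℕ => mdist P.m x (P.qq a)) := by
  refine ⟨0, ?_⟩
  rintro r ⟨a, rfl⟩
  exact mdist_nonneg _ _ _

theorem Psi_bdd (x : X) :
    BddBelow (Set.range fun a : Option ℕ => P.phi a + mdist P.m x (P.qq a)) := by
  refine ⟨0, ?_⟩
  rintro r ⟨a, rfl⟩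
  exact add_nonneg (P.phi_nonneg a) (mdist_nonneg _ _ _)

theorem DA_le (x : X) (a : Option ℕ) : P.DA x ≤ mdist P.m x (P.qq a) :=
  ciInf_le (P.DA_bdd x) a

theorem DA_nonneg (x : X) : 0 ≤ P.DA x :=
  le_ciInf fun a => mdist_nonneg _ _ _

theorem DA_qq (a : Option ℕ) : P.DA (P.qq a) = 0 := by
  refine le_antisymm ?_ (P.DA_nonneg _)
  have := P.DA_le (P.qq a) a
  rwa [mdist_self] at this

theorem Psi_le (x : X) (a : Option ℕ) : P.Psi x ≤ P.phi a + mdist P.m x (P.qq a) :=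
  ciInf_le (P.Psi_bdd x) a

theorem Psi_ge (x : X) (a : Option ℕ) : P.phi a - mdist P.m x (P.qq a) ≤ P.Psi x := by
  refine le_ciInf fun b => ?_
  have h1 := P.phi_lip a b
  have h2 := mdist_triangle P.m (P.qq a) x (P.qq b)
  rw [mdist_comm P.m (P.qq a) x] at h2
  linarith

theorem Psi_nonneg (x : X) : 0 ≤ P.Psi x :=
  le_ciInf fun a => add_nonneg (P.phi_nonneg a) (mdist_nonneg _ _ _)

theorem Psi_qq (a : Option ℕ) : P.Psi (P.qq a) = P.phi a := by
  refine le_antisymm ?_ ?_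
  · have := P.Psi_le (P.qq a) a
    rwa [mdist_self, add_zero] at this
  · have := P.Psi_ge (P.qq a) a
    rwa [mdist_self, sub_zero] at this

theorem Psi_lip (x y : X) : P.Psi x - P.Psi y ≤ mdist P.m x y := by
  have : P.Psi x - mdist P.m x y ≤ P.Psi y := by
    refine le_ciInf fun a => ?_
    have h1 := P.Psi_le x a
    have h2 := mdist_triangle P.m x y (P.qq a)
    linarith
  linarith

theorem Psi_abs (x y : X) : |P.Psi x - P.Psi y| ≤ mdist P.m x y := by
  rw [abs_sub_le_iff]
  refine ⟨P.Psi_lip x y, ?_⟩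
  rw [mdist_comm]
  exact P.Psi_lip y x

theorem DA_pos {x : X} (hx : ∀ a, x ≠ P.qq a) : 0 < P.DA x := by
  have hc1 : 0 < mdist P.m x P.p := mdist_pos _ (hx none)
  obtain ⟨K, hK⟩ := P.rr_small (show 0 < mdist P.m x P.p / 2 by linarith)
  have hne : (Finset.range (K + 1)).Nonempty := ⟨0, by simp⟩
  set F := (Finset.range (K + 1)).inf' hne (fun k => mdist P.m x (P.pt k)) with hF
  have hFpos : 0 < F := by
    rw [hF, Finset.lt_inf'_iff]
    exact fun k _ => mdist_pos _ (hx (some k))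
  have hmin : 0 < min (mdist P.m x P.p / 2) F := lt_min (by linarith) hFpos
  refine lt_of_lt_of_le hmin (le_ciInf fun a => ?_)
  cases a with
  | none =>
    rw [qq_none]
    calc min (mdist P.m x P.p / 2) F ≤ mdist P.m x P.p / 2 := min_le_left _ _
      _ ≤ mdist P.m x P.p := by linarith
  | some k =>
    rw [qq_some]
    rcases le_or_gt k K with hkK | hkK
    · calc min (mdist P.m x P.p / 2) F ≤ F := min_le_right _ _
        _ ≤ mdist P.m x (P.pt k) := Finset.inf'_le _ (Finset.mem_range.2 (by omega))
    · have h1 : P.rr k ≤ P.rr K := P.rr_anti hkK.le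
      have h2 := mdist_triangle P.m x (P.pt k) P.p
      have h3 : mdist P.m (P.pt k) P.p = P.rr k := (P.rr_def k).symm
      calc min (mdist P.m x P.p / 2) F ≤ mdist P.m x P.p / 2 := min_le_left _ _
        _ ≤ mdist P.m x (P.pt k) := by linarith

theorem gap (a : Option ℕ) {ε : ℝ} (hε : 0 < ε) :
    ∃ γ, 0 < γ ∧ ∀ b, |P.phi b - P.phi a| < γ → mdist P.m (P.qq b) (P.qq a) < ε := by
  cases a with
  | none =>
    obtain ⟨K, hK⟩ := P.rr_small hε
    refine ⟨P.psi K, P.psi_pos K, fun b hb => ?_⟩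
    cases b with
    | none => rw [qq_none, mdist_self]; exact hε
    | some k =>
      rw [phi_some, phi_none, sub_zero, abs_of_pos (P.psi_pos k)] at hb
      have hkK : K ≤ k := by
        by_contra hcon
        push_neg at hcon
        exact absurd hb (not_lt.2 (P.psi_strictAnti.antitone hcon.le))
      rw [qq_some, qq_none, ← rr_def]
      exact lt_of_le_of_lt (P.rr_anti hkK) hK
  | some k =>
    have hbig : ∃ γ, 0 < γ ∧ ∀ b, b ≠ some k → γ ≤ |P.phi b - P.phi (some k)| := by
      cases k with
      | zero =>
        refine ⟨P.psi 0 - P.psi 1, by have := P.psi_strictAnti (show 0 < 1 by norm_num); linarith,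
          fun b hb => ?_⟩
        cases b with
        | none =>
          rw [phi_none, phi_some, zero_sub, abs_neg, abs_of_pos (P.psi_pos 0)]
          have := P.psi_pos 1
          linarith
        | some j =>
          have hj : 1 ≤ j := by
            rcases Nat.eq_zero_or_pos j with h | h
            · exact absurd (by rw [h]) hb
            · exact h
          have h1 : P.psi j ≤ P.psi 1 := P.psi_strictAnti.antitone hj
          have h2 : P.psi j < P.psi 0 := P.psi_strictAnti (by omega)
          rw [phi_some, phi_some, abs_of_neg (by linarith)]
          linarith
      | succ k' =>
        refine ⟨min (P.psi (k' + 1) - P.psi (k' + 2)) (P.psi k' - P.psi (k' + 1)), ?_, fun b hb => ?_⟩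
        · have h1 := P.psi_strictAnti (show k' + 1 < k' + 2 by omega)
          have h2 := P.psi_strictAnti (show k' < k' + 1 by omega)
          exact lt_min (by linarith) (by linarith)
        cases b with
        | none =>
          rw [phi_none, phi_some, zero_sub, abs_neg, abs_of_pos (P.psi_pos _)]
          have := P.psi_pos (k' + 2)
          calc min (P.psi (k' + 1) - P.psi (k' + 2)) (P.psi k' - P.psi (k' + 1))
              ≤ P.psi (k' + 1) - P.psi (k' + 2) := min_le_left _ _
            _ ≤ P.psi (k' + 1) := by linarith
        | some j =>
          rw [phi_some, phi_some]
          rcases lt_or_gt_of_ne (show j ≠ k' + 1 from fun h => hb (by rw [h])) with h | h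
          · have h1 : P.psi k' ≤ P.psi j := P.psi_strictAnti.antitone (by omega)
            have h2 : P.psi j - P.psi (k' + 1) > 0 := by
              have := P.psi_strictAnti h
              linarith
            rw [abs_of_pos h2]
            calc min (P.psi (k' + 1) - P.psi (k' + 2)) (P.psi k' - P.psi (k' + 1))
                ≤ P.psi k' - P.psi (k' + 1) := min_le_right _ _
              _ ≤ P.psi j - P.psi (k' + 1) := by linarith
          · have h1 : P.psi j ≤ P.psi (k' + 2) := P.psi_strictAnti.antitone (by omega)
            have h2 : P.psi j - P.psi (k' + 1) < 0 := by
              have := P.psi_strictAnti h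
              linarith
            rw [abs_of_neg h2, neg_sub]
            calc min (P.psi (k' + 1) - P.psi (k' + 2)) (P.psi k' - P.psi (k' + 1))
                ≤ P.psi (k' + 1) - P.psi (k' + 2) := min_le_left _ _
              _ ≤ P.psi (k' + 1) - P.psi j := by linarith
    obtain ⟨γ, hγ, hspec⟩ := hbig
    refine ⟨γ, hγ, fun b hb => ?_⟩
    by_cases hbk : b = some k
    · subst hbk
      rw [mdist_self]
      exact hε
    · exact absurd hb (not_lt.2 (hspec b hbk))

/-! ### The shortcut pre-distance `hS` and the new metric `eD` -/

noncomputable def hS (x y : X) : ℝ :=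
  ⨅ w : Option ℕ × Option ℕ,
    (mdist P.m x (P.qq w.1) + |P.phi w.1 - P.phi w.2| + mdist P.m y (P.qq w.2))

theorem hS_bdd (x y : X) : BddBelow (Set.range fun w : Option ℕ × Option ℕ =>
    mdist P.m x (P.qq w.1) + |P.phi w.1 - P.phi w.2| + mdist P.m y (P.qq w.2)) := by
  refine ⟨0, ?_⟩
  rintro r ⟨w, rfl⟩
  have := mdist_nonneg P.m x (P.qq w.1)
  have := mdist_nonneg P.m y (P.qq w.2)
  have := abs_nonneg (P.phi w.1 - P.phi w.2)
  dsimp only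
  linarith

theorem hS_le (x y : X) (a b : Option ℕ) :
    P.hS x y ≤ mdist P.m x (P.qq a) + |P.phi a - P.phi b| + mdist P.m y (P.qq b) :=
  ciInf_le (P.hS_bdd x y) (a, b)

theorem le_hS (x y : X) {r : ℝ}
    (h : ∀ a b, r ≤ mdist P.m x (P.qq a) + |P.phi a - P.phi b| + mdist P.m y (P.qq b)) :
    r ≤ P.hS x y :=
  le_ciInf fun w => h w.1 w.2

theorem hS_nonneg (x y : X) : 0 ≤ P.hS x y := by
  refine P.le_hS x y fun a b => ?_
  have := mdist_nonneg P.m x (P.qq a)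
  have := mdist_nonneg P.m y (P.qq b)
  have := abs_nonneg (P.phi a - P.phi b)
  linarith

theorem DA_le_hS (x y : X) : P.DA x ≤ P.hS x y := by
  refine P.le_hS x y fun a b => ?_
  have h1 := P.DA_le x a
  have := mdist_nonneg P.m y (P.qq b)
  have := abs_nonneg (P.phi a - P.phi b)
  linarith

theorem DA_le_hS' (x y : X) : P.DA y ≤ P.hS x y := by
  refine P.le_hS x y fun a b => ?_
  have h1 := P.DA_le y b
  have := mdist_nonneg P.m x (P.qq a)
  have := abs_nonneg (P.phi a - P.phi b)
  linarith

theorem Psi_sub_le_hS (x y : X) : P.Psi x - P.Psi y ≤ P.hS x y := by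
  refine P.le_hS x y fun a b => ?_
  have h1 := P.Psi_le x a
  have h2 := P.Psi_ge y b
  have h3 : P.phi a - P.phi b ≤ |P.phi a - P.phi b| := le_abs_self _
  linarith

theorem hS_comm (x y : X) : P.hS x y = P.hS y x := by
  have key : ∀ u v : X, P.hS u v ≤ P.hS v u := by
    intro u v
    refine le_ciInf fun w => ?_
    have := P.hS_le u v w.2 w.1
    calc P.hS u v ≤ mdist P.m u (P.qq w.2) + |P.phi w.2 - P.phi w.1| + mdist P.m v (P.qq w.1) :=
          this
      _ = mdist P.m v (P.qq w.1) + |P.phi w.1 - P.phi w.2| + mdist P.m u (P.qq w.2) := by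
          rw [abs_sub_comm]; ring
  exact le_antisymm (key x y) (key y x)

theorem Psi_abs_le_hS (x y : X) : |P.Psi x - P.Psi y| ≤ P.hS x y := by
  rw [abs_sub_le_iff]
  refine ⟨P.Psi_sub_le_hS x y, ?_⟩
  rw [P.hS_comm]
  exact P.Psi_sub_le_hS y x

theorem hS_tri_left (x y z : X) : P.hS x z ≤ mdist P.m x y + P.hS y z := by
  have : P.hS x z - mdist P.m x y ≤ P.hS y z := by
    refine le_ciInf fun w => ?_
    have h1 := P.hS_le x z w.1 w.2
    have h2 := mdist_triangle P.m x y (P.qq w.1)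
    linarith
  linarith

theorem hS_tri_right (x y z : X) : P.hS x z ≤ P.hS x y + mdist P.m y z := by
  rw [P.hS_comm x z, P.hS_comm x y]
  have := P.hS_tri_left z y x
  rw [mdist_comm P.m y z]
  linarith

theorem hS_tri (x y z : X) : P.hS x z ≤ P.hS x y + P.hS y z := by
  have key : ∀ w w' : Option ℕ × Option ℕ,
      P.hS x z ≤ (mdist P.m x (P.qq w.1) + |P.phi w.1 - P.phi w.2| + mdist P.m y (P.qq w.2))
        + (mdist P.m y (P.qq w'.1) + |P.phi w'.1 - P.phi w'.2| + mdist P.m z (P.qq w'.2)) := by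
    intro w w'
    have h0 := P.hS_le x z w.1 w'.2
    have h1 : |P.phi w.1 - P.phi w'.2| ≤
        |P.phi w.1 - P.phi w.2| + |P.phi w.2 - P.phi w'.1| + |P.phi w'.1 - P.phi w'.2| := by
      calc |P.phi w.1 - P.phi w'.2| ≤ |P.phi w.1 - P.phi w.2| + |P.phi w.2 - P.phi w'.2| :=
            abs_sub_le _ _ _
        _ ≤ |P.phi w.1 - P.phi w.2| + (|P.phi w.2 - P.phi w'.1| + |P.phi w'.1 - P.phi w'.2|) := by
            have := abs_sub_le (P.phi w.2) (P.phi w'.1) (P.phi w'.2)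
            linarith
        _ = _ := by ring
    have h2 := P.phi_abs w.2 w'.1
    have h3 := mdist_triangle P.m (P.qq w.2) y (P.qq w'.1)
    have h4 : mdist P.m (P.qq w.2) y = mdist P.m y (P.qq w.2) := mdist_comm _ _ _
    linarith
  have step1 : ∀ w : Option ℕ × Option ℕ,
      P.hS x z - (mdist P.m x (P.qq w.1) + |P.phi w.1 - P.phi w.2| + mdist P.m y (P.qq w.2))
        ≤ P.hS y z := fun w => le_ciInf fun w' => by linarith [key w w']
  have step2 : P.hS x z - P.hS y z ≤ P.hS x y := le_ciInf fun w => by linarith [step1 w]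
  linarith

theorem qq_p (a : Option ℕ) : mdist P.m (P.qq a) P.p ≤ P.c / 4 := by
  cases a with
  | none => rw [qq_none, mdist_self]; linarith [P.hc]
  | some k => rw [qq_some, ← rr_def]; exact (P.rr_lt_c k).le

theorem qq_diam (a b : Option ℕ) : mdist P.m (P.qq a) (P.qq b) ≤ P.c / 2 := by
  have h1 := mdist_triangle P.m (P.qq a) P.p (P.qq b)
  have h2 := P.qq_p a
  have h3 := P.qq_p b
  rw [mdist_comm P.m P.p (P.qq b)] at h1
  linarith

theorem mdist_le_hS_add (x y : X) : mdist P.m x y ≤ P.hS x y + P.c / 2 := by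
  have key : mdist P.m x y - P.c / 2 ≤ P.hS x y := by
    refine P.le_hS x y fun a b => ?_
    have h1 := mdist_triangle P.m x (P.qq a) y
    have h2 := mdist_triangle P.m (P.qq a) (P.qq b) y
    have h3 := P.qq_diam a b
    have h4 : mdist P.m (P.qq b) y = mdist P.m y (P.qq b) := mdist_comm _ _ _
    have h5 := abs_nonneg (P.phi a - P.phi b)
    linarith
  linarith

noncomputable def eD (x y : X) : ℝ := min (mdist P.m x y) (P.hS x y)

theorem eD_le_mdist (x y : X) : P.eD x y ≤ mdist P.m x y := min_le_left _ _

theorem eD_le_hS (x y : X) : P.eD x y ≤ P.hS x y := min_le_right _ _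

theorem eD_nonneg (x y : X) : 0 ≤ P.eD x y := le_min (mdist_nonneg _ _ _) (P.hS_nonneg x y)

theorem eD_self (x : X) : P.eD x x = 0 :=
  le_antisymm ((P.eD_le_mdist x x).trans_eq (mdist_self _ _)) (P.eD_nonneg x x)

theorem eD_comm (x y : X) : P.eD x y = P.eD y x := by
  unfold eD
  rw [mdist_comm, P.hS_comm]

theorem eD_triangle (x y z : X) : P.eD x z ≤ P.eD x y + P.eD y z := by
  rcases le_total (mdist P.m x y) (P.hS x y) with h1 | h1 <;>
    rcases le_total (mdist P.m y z) (P.hS y z) with h2 | h2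
  · have e1 : P.eD x y = mdist P.m x y := min_eq_left h1
    have e2 : P.eD y z = mdist P.m y z := min_eq_left h2
    rw [e1, e2]
    exact (P.eD_le_mdist x z).trans (mdist_triangle P.m x y z)
  · have e1 : P.eD x y = mdist P.m x y := min_eq_left h1
    have e2 : P.eD y z = P.hS y z := min_eq_right h2
    rw [e1, e2]
    exact (P.eD_le_hS x z).trans (P.hS_tri_left x y z)
  · have e1 : P.eD x y = P.hS x y := min_eq_right h1
    have e2 : P.eD y z = mdist P.m y z := min_eq_left h2
    rw [e1, e2]
    exact (P.eD_le_hS x z).trans (P.hS_tri_right x y z)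
  · have e1 : P.eD x y = P.hS x y := min_eq_right h1
    have e2 : P.eD y z = P.hS y z := min_eq_right h2
    rw [e1, e2]
    exact (P.eD_le_hS x z).trans (P.hS_tri x y z)

theorem eD_eq_zero {x y : X} (h : P.eD x y = 0) : x = y := by
  rcases le_total (mdist P.m x y) (P.hS x y) with h1 | h1
  · have e1 : P.eD x y = mdist P.m x y := min_eq_left h1
    rw [e1] at h
    exact mdist_eq_zero _ h
  · have e1 : P.eD x y = P.hS x y := min_eq_right h1
    rw [e1] at h
    have hDx : P.DA x = 0 :=
      le_antisymm (by rw [← h]; exact P.DA_le_hS x y) (P.DA_nonneg x)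
    have hDy : P.DA y = 0 :=
      le_antisymm (by rw [← h]; exact P.DA_le_hS' x y) (P.DA_nonneg y)
    have hPsi : P.Psi x = P.Psi y := by
      have := P.Psi_abs_le_hS x y
      rw [h] at this
      have h2 := abs_nonneg (P.Psi x - P.Psi y)
      have : |P.Psi x - P.Psi y| = 0 := le_antisymm this h2
      rw [abs_eq_zero] at this
      linarith
    have hxA : ∃ a, x = P.qq a := by
      by_contra hcon
      push_neg at hcon
      exact absurd hDx (ne_of_gt (P.DA_pos hcon))
    have hyA : ∃ b, y = P.qq b := by
      by_contra hcon
      push_neg at hcon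
      exact absurd hDy (ne_of_gt (P.DA_pos hcon))
    obtain ⟨a, rfl⟩ := hxA
    obtain ⟨b, rfl⟩ := hyA
    rw [P.Psi_qq, P.Psi_qq] at hPsi
    rw [P.phi_injective hPsi]

theorem mdist_sub_le_eD (x y : X) : mdist P.m x y - P.c / 2 ≤ P.eD x y := by
  refine le_min (by linarith [P.hc]) ?_
  have := P.mdist_le_hS_add x y
  linarith

/-! ### Topology control -/

theorem eD_control (x : X) {ε : ℝ} (hε : 0 < ε) :
    ∃ δ, 0 < δ ∧ ∀ y, P.eD x y < δ → mdist P.m x y < ε := by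
  by_cases hx : ∀ a, x ≠ P.qq a
  · refine ⟨min ε (P.DA x), lt_min hε (P.DA_pos hx), fun y hy => ?_⟩
    rcases le_total (mdist P.m x y) (P.hS x y) with h | h
    · have e1 : P.eD x y = mdist P.m x y := min_eq_left h
      rw [e1] at hy
      exact lt_of_lt_of_le hy (min_le_left _ _)
    · have e1 : P.eD x y = P.hS x y := min_eq_right h
      rw [e1] at hy
      have h2 := P.DA_le_hS x y
      have h3 := min_le_right ε (P.DA x)
      linarith
  · push_neg at hx
    obtain ⟨a, rfl⟩ := hx
    obtain ⟨γ, hγ, hgap⟩ := P.gap a (show 0 < ε / 2 by linarith)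
    refine ⟨min (ε / 2) (γ / 2), lt_min (by linarith) (by linarith), fun y hy => ?_⟩
    rcases le_total (mdist P.m (P.qq a) y) (P.hS (P.qq a) y) with h | h
    · have e1 : P.eD (P.qq a) y = mdist P.m (P.qq a) y := min_eq_left h
      rw [e1] at hy
      have := min_le_left (ε / 2) (γ / 2)
      linarith
    · have e1 : P.eD (P.qq a) y = P.hS (P.qq a) y := min_eq_right h
      rw [e1] at hy
      have hDAy : P.DA y < min (ε / 2) (γ / 2) :=
        lt_of_le_of_lt (P.DA_le_hS' (P.qq a) y) hy
      have hex : ∃ b, mdist P.m y (P.qq b) < min (ε / 2) (γ / 2) :=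
        exists_lt_of_ciInf_lt hDAy
      obtain ⟨b, hb⟩ := hex
      have h1 : |P.Psi (P.qq a) - P.Psi y| ≤ P.hS (P.qq a) y := P.Psi_abs_le_hS _ _
      have h2 : |P.Psi y - P.Psi (P.qq b)| ≤ mdist P.m y (P.qq b) := P.Psi_abs y (P.qq b)
      have h3 : |P.phi b - P.phi a| < γ := by
        rw [P.Psi_qq] at h1 h2
        have habs : |P.phi b - P.phi a| ≤ |P.phi b - P.Psi y| + |P.Psi y - P.phi a| :=
          abs_sub_le _ _ _
        have h4 : |P.phi b - P.Psi y| = |P.Psi y - P.phi b| := abs_sub_comm _ _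
        have h5 : |P.Psi y - P.phi a| = |P.phi a - P.Psi y| := abs_sub_comm _ _
        have h6 := min_le_right (ε / 2) (γ / 2)
        linarith
      have h7 := hgap b h3
      have h8 := mdist_triangle P.m (P.qq a) (P.qq b) y
      have h9 : mdist P.m (P.qq a) (P.qq b) = mdist P.m (P.qq b) (P.qq a) := mdist_comm _ _ _
      have h10 : mdist P.m (P.qq b) y = mdist P.m y (P.qq b) := mdist_comm _ _ _
      have h11 := min_le_left (ε / 2) (γ / 2)
      linarith

/-! ### Chains: `eD` is not uniformly disconnected -/

theorem eD_link {j k : ℕ} :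
    P.eD (P.pt j) (P.pt k) ≤ |P.psi j - P.psi k| := by
  have h := P.hS_le (P.pt j) (P.pt k) (some j) (some k)
  rw [qq_some, qq_some, mdist_self, mdist_self, phi_some, phi_some] at h
  have := P.eD_le_hS (P.pt j) (P.pt k)
  linarith

theorem eD_endpoint {j k : ℕ} (hjk : j < k) :
    P.psi j - P.psi k ≤ P.eD (P.pt j) (P.pt k) := by
  refine le_min ?_ ?_
  · -- mdist branch
    have h1 := P.pt_sep j k
    have h2 := P.rr_quarter hjk
    have h3 := P.psi_le j
    have h4 := P.psi_pos k
    have h5 := P.rr_pos j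
    linarith
  · have h1 := P.Psi_abs_le_hS (P.pt j) (P.pt k)
    have h2 : P.Psi (P.pt j) = P.psi j := P.Psi_qq (some j)
    have h3 : P.Psi (P.pt k) = P.psi k := P.Psi_qq (some k)
    rw [h2, h3] at h1
    have h4 : P.psi j - P.psi k ≤ |P.psi j - P.psi k| := le_abs_self _
    linarith

theorem eD_not_UD (em : MetricSpace X) (he : ∀ x y, mdist em x y = P.eD x y) :
    ¬ IsUniformlyDisconnected em := by
  rintro ⟨δ, hδ0, hδ1, H⟩
  obtain ⟨n, hn⟩ := exists_nat_gt (1 / δ + 1)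
  have h2n : n < 2 ^ n := Nat.lt_two_pow_self
  set N := 2 ^ n - 1 with hN
  have h1 : (1:ℕ) ≤ 2 ^ n := Nat.one_le_two_pow
  have hNn : n ≤ N := by omega
  have hδinv : (1:ℝ) < 1 / δ + 1 := by
    have : (1:ℝ) < 1 / δ := by
      rw [lt_div_iff₀ hδ0]
      linarith
    linarith
  have hn1 : (1:ℝ) ≤ n := by
    have : (1:ℝ) < n := lt_trans hδinv hn
    linarith
  have hN1 : 1 ≤ N := by
    have : (1:ℝ) ≤ (n:ℝ) := hn1
    have : 1 ≤ n := by exact_mod_cast this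
    omega
  have hNr : (1:ℝ) / δ + 1 < (N:ℝ) := by
    calc (1:ℝ) / δ + 1 < n := hn
      _ ≤ N := by exact_mod_cast hNn
  have hNδ : 1 < δ * N := by
    have h3 : (0:ℝ) < N := by
      have : (1:ℕ) ≤ N := hN1
      exact_mod_cast lt_of_lt_of_le zero_lt_one (by exact_mod_cast this)
    rw [div_add' _ _ _ (ne_of_gt hδ0)] at hNr
    rw [div_lt_iff₀ hδ0] at hNr
    nlinarith
  set B := 2 ^ n - 1 with hB
  have key := H N (fun j => P.pt (B + (j : ℕ))) ?_
  · omega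
  intro i
  set u := (P.CC n / 4) * (1 / 2 ^ (n + 1)) with hu
  have hCC := P.CC_pos n
  have hupos : 0 < u := by
    rw [hu]
    positivity
  -- endpoint value
  have hblock0 : P.psi (B + 0) = (P.CC n / 4) * (1 - ((0:ℕ):ℝ) / 2 ^ (n + 1)) := by
    rw [hB]
    exact P.psi_block (show 0 < 2 ^ n by omega)
  have hblockN : P.psi (B + N) = (P.CC n / 4) * (1 - (N:ℝ) / 2 ^ (n + 1)) := by
    rw [hB]
    exact P.psi_block (show N < 2 ^ n by omega)
  have hdrop : P.psi (B + 0) - P.psi (B + N) = u * N := by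
    rw [hblock0, hblockN, hu]
    push_cast
    ring
  have hdroppos : 0 < u * N := by
    have : (0:ℝ) < N := by
      have : (1:ℕ) ≤ N := hN1
      exact_mod_cast lt_of_lt_of_le zero_lt_one (by exact_mod_cast this)
    positivity
  -- endpoint lower bound
  have hend : u * N ≤ mdist em (P.pt (B + 0)) (P.pt (B + N)) := by
    rw [he]
    have := P.eD_endpoint (show B + 0 < B + N by omega)
    linarith [hdrop]
  -- link upper bound
  have hlink : mdist em (P.pt (B + (i.castSucc : ℕ))) (P.pt (B + (i.succ : ℕ))) ≤ u := by
    rw [he]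
    have hic : (i.castSucc : ℕ) = (i : ℕ) := rfl
    have his : (i.succ : ℕ) = (i : ℕ) + 1 := rfl
    rw [hic, his]
    have hiN : (i : ℕ) < N := i.2
    have hbl1 : P.psi (B + (i:ℕ)) = (P.CC n / 4) * (1 - ((i:ℕ):ℝ) / 2 ^ (n + 1)) := by
      rw [hB]; exact P.psi_block (by omega)
    have hbl2 : P.psi (B + ((i:ℕ) + 1))
        = (P.CC n / 4) * (1 - (((i:ℕ):ℝ) + 1) / 2 ^ (n + 1)) := by
      rw [hB]
      have := P.psi_block (n := n) (i := (i:ℕ) + 1) (by omega)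
      rw [this]
      push_cast
      ring_nf
    have habs : |P.psi (B + (i:ℕ)) - P.psi (B + ((i:ℕ) + 1))| = u := by
      rw [hbl1, hbl2, hu]
      rw [show (P.CC n / 4) * (1 - ((i:ℕ):ℝ) / 2 ^ (n + 1))
          - (P.CC n / 4) * (1 - (((i:ℕ):ℝ) + 1) / 2 ^ (n + 1))
          = (P.CC n / 4) * (1 / 2 ^ (n + 1)) by ring]
      rw [abs_of_pos]
      positivity
    have := P.eD_link (j := B + (i:ℕ)) (k := B + ((i:ℕ) + 1))
    rw [habs] at this
    exact this
  -- combine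
  simp only [Fin.coe_castSucc, Fin.val_succ, Fin.val_zero, Fin.val_last]
  have hstep : u < δ * (u * N) := by
    have := mul_lt_mul_of_pos_left hNδ hupos
    rw [mul_one] at this
    calc u < u * (δ * N) := this
      _ = δ * (u * N) := by ring
  calc mdist em (P.pt (B + (i : ℕ))) (P.pt (B + ((i : ℕ) + 1))) ≤ u := by
        have := hlink
        simpa using this
    _ < δ * (u * N) := hstep
    _ ≤ δ * mdist em (P.pt (B + 0)) (P.pt (B + N)) := by
        apply mul_le_mul_of_nonneg_left hend hδ0.le

/-! ### The perturbed compatible metric -/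

theorem main [t : TopologicalSpace X] (hm : P.m ∈ MetricsOn X) :
    ∃ em : MetricSpace X, em ∈ MetricsOn X ∧
      (∀ x y : X, |mdist P.m x y - mdist em x y| ≤ P.c) ∧
      ¬ IsUniformlyDisconnected em := by
  have hmt : P.m.toUniformSpace.toTopologicalSpace = t := hm
  have hH : ∀ s : Set X, IsOpen s ↔ ∀ x ∈ s, ∃ ε > 0, ∀ y, P.eD x y < ε → y ∈ s := by
    intro s
    have base := isOpen_iff_of_mdist P.m s
    rw [hmt] at base
    rw [base]
    constructor
    · rintro H x hx
      obtain ⟨ε, hε, he⟩ := H x hx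
      obtain ⟨δ, hδ, hctrl⟩ := P.eD_control x hε
      exact ⟨δ, hδ, fun y hy => he y (hctrl y hy)⟩
    · rintro H x hx
      obtain ⟨ε, hε, he⟩ := H x hx
      exact ⟨ε, hε, fun y hy => he y (lt_of_le_of_lt (P.eD_le_mdist x y) hy)⟩
  refine ⟨MetricSpace.ofDistTopology P.eD P.eD_self P.eD_comm P.eD_triangle hH
    (fun x y h => P.eD_eq_zero h), ?_, ?_, ?_⟩
  · exact rfl
  · intro x y
    have h1 := P.eD_le_mdist x y
    have h2 := P.mdist_sub_le_eD x y
    have he : mdist (MetricSpace.ofDistTopology P.eD P.eD_self P.eD_comm P.eD_triangle hH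
        (fun x y h => P.eD_eq_zero h)) x y = P.eD x y := rfl
    rw [he, abs_le]
    constructor <;> [linarith [P.hc]; linarith [P.hc]]
  · exact P.eD_not_UD _ (fun x y => rfl)

end Pack

end NonUD

theorem non_uniformly_disconnected_dense_Gdelta (X : Type*) [TopologicalSpace X]
    [TopologicalSpace.MetrizableSpace X] (hX : ¬DiscreteTopology X) :
    Dense { d : Met X | ¬IsUniformlyDisconnected d.1 } ∧
    IsGδ { d : Met X | ¬IsUniformlyDisconnected d.1 } := by
  classical
  open NonUD in
  set T : ℕ → Set (Met X) := fun n =>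
    {d : Met X | ∃ N, N ≠ 0 ∧ ∃ z : Fin (N+1) → X, ∀ i : Fin N,
      mdist d.1 (z i.castSucc) (z i.succ)
        < (1/((n:ℝ)+2)) * mdist d.1 (z 0) (z (Fin.last N))} with hT
  have hST : { d : Met X | ¬IsUniformlyDisconnected d.1 } = ⋂ n, T n := by
    ext d
    simp only [Set.mem_iInter, Set.mem_setOf_eq, hT]
    constructor
    · intro hd n
      simp only [IsUniformlyDisconnected] at hd
      push_neg at hd
      have h0 : (0:ℝ) < 1/((n:ℝ)+2) := by positivity
      have h1 : (1:ℝ)/((n:ℝ)+2) < 1 := by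
        rw [div_lt_one (by positivity)]
        have : (0:ℝ) ≤ n := Nat.cast_nonneg n
        linarith
      obtain ⟨N, z, hz, hN⟩ := hd _ h0 h1
      exact ⟨N, hN, z, hz⟩
    · intro hd
      rintro ⟨δ, hδ0, hδ1, H⟩
      obtain ⟨n, hn⟩ := exists_nat_one_div_lt hδ0
      obtain ⟨N, hN, z, hz⟩ := hd n
      refine absurd (H N z fun i => ?_) hN
      have hE := NonUD.mdist_nonneg d.1 (z 0) (z (Fin.last N))
      have hle : (1:ℝ)/((n:ℝ)+2) ≤ δ := by
        have h2 : (1:ℝ)/((n:ℝ)+2) ≤ 1/((n:ℝ)+1) := by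
          apply one_div_le_one_div_of_le (by positivity)
          linarith
        linarith
      calc mdist d.1 (z i.castSucc) (z i.succ)
          < (1/((n:ℝ)+2)) * mdist d.1 (z 0) (z (Fin.last N)) := hz i
        _ ≤ δ * mdist d.1 (z 0) (z (Fin.last N)) := by
            apply mul_le_mul_of_nonneg_right hle hE
  have hTopen : ∀ n, IsOpen (T n) := by
    intro n
    rw [isOpen_iff_forall_mem_open]
    rintro d ⟨N, hN, z, hz⟩
    have hNpos : 0 < N := Nat.pos_of_ne_zero hN
    haveI : Nonempty (Fin N) := ⟨⟨0, hNpos⟩⟩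
    set δn : ℝ := 1/((n:ℝ)+2) with hδdef
    have hδn : 0 < δn := by rw [hδdef]; positivity
    set E := mdist d.1 (z 0) (z (Fin.last N)) with hE
    have hEpos : 0 < E := by
      have h0 := hz ⟨0, hNpos⟩
      have h1 := NonUD.mdist_nonneg d.1 (z (⟨0, hNpos⟩ : Fin N).castSucc)
        (z (⟨0, hNpos⟩ : Fin N).succ)
      nlinarith
    set M := Finset.univ.sup' Finset.univ_nonempty
      (fun i : Fin N => mdist d.1 (z i.castSucc) (z i.succ)) with hM
    have hMlt : M < δn * E := by
      rw [hM, Finset.sup'_lt_iff]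
      exact fun i _ => hz i
    set ρ := (δn * E - M)/(2*(1+δn)) with hρ
    have hρpos : 0 < ρ := by
      rw [hρ]
      apply div_pos (by linarith) (by positivity)
    refine ⟨{e : Met X | metD d.1 e.1 < ENNReal.ofReal ρ}, ?_,
      NonUD.isOpen_metD_ball d (by simp [hρpos]), ?_⟩
    · rintro e he
      have hpt := NonUD.pointwise_of_metD_lt he
      refine ⟨N, hN, z, fun i => ?_⟩
      have hlinkd : mdist d.1 (z i.castSucc) (z i.succ) ≤ M := by
        rw [hM]
        exact Finset.le_sup' (fun i : Fin N => mdist d.1 (z i.castSucc) (z i.succ))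
          (Finset.mem_univ i)
      have h1 := hpt (z i.castSucc) (z i.succ)
      have h2 := hpt (z 0) (z (Fin.last N))
      rw [abs_lt] at h1 h2
      have hmul : ρ * (2*(1+δn)) = δn * E - M := by
        rw [hρ]
        field_simp
      have hcomb : M + ρ + δn * ρ ≤ δn * E := by nlinarith
      have hexp : δn * (E - ρ) = δn * E - δn * ρ := by ring
      have hlt : E - ρ < mdist e.1 (z 0) (z (Fin.last N)) := by
        rw [hE]
        linarith [h2.2]
      have hfin := mul_lt_mul_of_pos_left hlt hδn
      linarith [h1.2]
    · show metD d.1 d.1 < ENNReal.ofReal ρ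
      rw [NonUD.metD_self]
      simp [hρpos]
  constructor
  · rw [dense_iff_inter_open]
    intro U hU hUne
    obtain ⟨d, hd⟩ := hUne
    obtain ⟨ε, hε, hball⟩ := NonUD.exists_ball_subset hU d hd
    obtain ⟨c, hc0, hcε⟩ : ∃ c : ℝ, 0 < c ∧ ENNReal.ofReal c < ε := by
      rcases eq_or_ne ε ⊤ with h | h
      · exact ⟨1, one_pos, by rw [h]; exact ENNReal.ofReal_lt_top⟩
      · have h1 : 0 < ε.toReal := ENNReal.toReal_pos hε.ne' h
        refine ⟨ε.toReal/2, by linarith, ?_⟩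
        calc ENNReal.ofReal (ε.toReal/2) < ENNReal.ofReal ε.toReal := by
              rw [ENNReal.ofReal_lt_ofReal_iff h1]
              linarith
          _ = ε := ENNReal.ofReal_toReal h
    obtain ⟨p, hp⟩ := NonUD.exists_acc hX d.1 d.2
    set P : NonUD.Pack X := ⟨d.1, p, c, hc0, hp⟩ with hP
    obtain ⟨em, hem, hbound, hnud⟩ := P.main d.2
    refine ⟨⟨em, hem⟩, hball ?_, hnud⟩
    show metD d.1 em < ε
    exact lt_of_le_of_lt (NonUD.metD_le_ofReal hbound) hcε
  · rw [hST]
    exact IsGδ.iInter fun n => (hTopen n).isGδ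
end

section
/- Let X be a non-discrete metrizable topological space, let n ≥ 2 be an integer, and let f : ℝ^{n(n−1)/2} → ℝ be a continuous function (whose argument is indexed by the unordered pairs {i,j} with 1 ≤ i < j ≤ n). Assume that f is positively sub-homogeneous, i.e., there exists c ∈ (0,∞) such that f(r·x) ≤ r^c · f(x) for every x ∈ ℝ^{n(n−1)/2} and every r ∈ (0,∞), and assume that there exists a metric space not satisfying the (n, f)-metric inequality. Then the set of all d ∈ Met(X) such that (X, d) does not satisfy the (n, f)-metric inequality is a dense open subset of Met(X). -/
open scoped ENNReal

universe u v

/-- The index type of unordered pairs `{i, j}` with `1 ≤ i < j ≤ n`. -/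
def PairIdx (n : ℕ) : Type :=
  { p : Fin n × Fin n // p.1 < p.2 }

/-- A metric space `(Y, m)` satisfies the `(n, f)`-metric inequality if
`f({d(a_i, a_j)}_{i<j}) ≥ 0` for all `n`-tuples of points. -/
def SatisfiesMetricIneq {Y : Type*} (m : MetricSpace Y) (n : ℕ)
    (f : (PairIdx n → ℝ) → ℝ) : Prop :=
  ∀ a : Fin n → Y, 0 ≤ f fun p => mdist m (a p.1.1) (a p.1.2)

/-- `f` is positively sub-homogeneous: there is `c > 0` with `f(r·x) ≤ r^c f(x)` for all `x`
and all `r > 0` (with a real-power exponent). -/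
def PositivelySubHomogeneous {n : ℕ} (f : (PairIdx n → ℝ) → ℝ) : Prop :=
  ∃ c : ℝ, 0 < c ∧ ∀ (x : PairIdx n → ℝ) (r : ℝ), 0 < r → f (r • x) ≤ r ^ c * f x

instance PairIdx.fintype (n : ℕ) : Fintype (PairIdx n) := by
  unfold PairIdx; infer_instance

lemma mdist_self {X : Type*} (m : MetricSpace X) (x : X) : mdist m x x = 0 := by
  letI := m; exact dist_self x

lemma mdist_comm {X : Type*} (m : MetricSpace X) (x y : X) : mdist m x y = mdist m y x := by
  letI := m; exact dist_comm x y

lemma mdist_triangle {X : Type*} (m : MetricSpace X) (x y z : X) :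
    mdist m x z ≤ mdist m x y + mdist m y z := by
  letI := m; exact dist_triangle x y z

lemma mdist_nonneg {X : Type*} (m : MetricSpace X) (x y : X) : 0 ≤ mdist m x y := by
  letI := m; exact dist_nonneg

lemma mdist_pos {X : Type*} (m : MetricSpace X) {x y : X} (h : x ≠ y) : 0 < mdist m x y := by
  letI := m; exact dist_pos.2 h

lemma mdist_eq_zero {X : Type*} (m : MetricSpace X) {x y : X} : mdist m x y = 0 ↔ x = y := by
  letI := m; exact dist_eq_zero

lemma metD_triangle {X : Type*} (a b c : MetricSpace X) : metD a c ≤ metD a b + metD b c := by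
  refine iSup_le fun p => ?_
  have h1 : ENNReal.ofReal |mdist a p.1 p.2 - mdist b p.1 p.2| ≤ metD a b :=
    le_iSup (fun q : X × X => ENNReal.ofReal |mdist a q.1 q.2 - mdist b q.1 q.2|) p
  have h2 : ENNReal.ofReal |mdist b p.1 p.2 - mdist c p.1 p.2| ≤ metD b c :=
    le_iSup (fun q : X × X => ENNReal.ofReal |mdist b q.1 q.2 - mdist c q.1 q.2|) p
  calc ENNReal.ofReal |mdist a p.1 p.2 - mdist c p.1 p.2|
      ≤ ENNReal.ofReal (|mdist a p.1 p.2 - mdist b p.1 p.2| + |mdist b p.1 p.2 - mdist c p.1 p.2|) :=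
        ENNReal.ofReal_le_ofReal (abs_sub_le _ _ _)
    _ ≤ _ := le_trans ENNReal.ofReal_add_le (add_le_add h1 h2)

lemma metD_self {X : Type*} (a : MetricSpace X) : metD a a = 0 := by
  simp [metD]

lemma isOpen_ball {X : Type*} [TopologicalSpace X] (d : Met X) {ε : ℝ≥0∞} (hε : 0 < ε) :
    IsOpen { e : Met X | metD d.1 e.1 < ε } :=
  TopologicalSpace.isOpen_generateFrom_of_mem ⟨d, ε, hε, rfl⟩

lemma exists_ball_subset {X : Type*} [TopologicalSpace X] {U : Set (Met X)} (hU : IsOpen U) :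
    ∀ x ∈ U, ∃ ε : ℝ≥0∞, 0 < ε ∧ { e : Met X | metD x.1 e.1 < ε } ⊆ U := by
  have hU' : TopologicalSpace.GenerateOpen
      { V | ∃ (d : Met X) (ε : ℝ≥0∞), 0 < ε ∧ V = { e : Met X | metD d.1 e.1 < ε } } U := hU
  clear hU
  induction hU' with
  | basic V hV =>
    rintro x hx
    obtain ⟨d, ε, hε, rfl⟩ := hV
    have hlt : metD d.1 x.1 < ε := hx
    refine ⟨ε - metD d.1 x.1, tsub_pos_iff_lt.2 hlt, fun e he => ?_⟩
    have : metD d.1 e.1 ≤ metD d.1 x.1 + metD x.1 e.1 := metD_triangle _ _ _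
    have h2 : metD d.1 x.1 + metD x.1 e.1 < metD d.1 x.1 + (ε - metD d.1 x.1) :=
      ENNReal.add_lt_add_left (by exact hlt.ne_top) he
    have h3 : metD d.1 x.1 + (ε - metD d.1 x.1) = ε := add_tsub_cancel_of_le hlt.le
    exact lt_of_le_of_lt this (h3 ▸ h2)
  | univ => exact fun x _ => ⟨1, one_pos, fun _ _ => trivial⟩
  | inter V W _ _ ihV ihW =>
    intro x hx
    obtain ⟨ε1, h1, hs1⟩ := ihV x hx.1
    obtain ⟨ε2, h2, hs2⟩ := ihW x hx.2
    refine ⟨min ε1 ε2, lt_min h1 h2, fun e he => ?_⟩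
    have he' : metD x.1 e.1 < min ε1 ε2 := he
    exact ⟨hs1 (he'.trans_le (min_le_left _ _)), hs2 (he'.trans_le (min_le_right _ _))⟩
  | sUnion S hS ih =>
    rintro x ⟨V, hV, hxV⟩
    obtain ⟨ε, hε, hsub⟩ := ih V hV x hxV
    exact ⟨ε, hε, fun e he => ⟨V, hV, hsub he⟩⟩

lemma isOpen_iff_of_mem {X : Type u} [tX : TopologicalSpace X] (d : MetricSpace X)
    (hd : d.toUniformSpace.toTopologicalSpace = tX) (s : Set X) :
    IsOpen s ↔ ∀ x ∈ s, ∃ δ > 0, ∀ y, mdist d x y < δ → y ∈ s := by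
  subst hd
  letI := d
  rw [Metric.isOpen_iff]
  refine forall₂_congr fun x hx => ?_
  constructor
  · rintro ⟨δ, hδ, hb⟩
    exact ⟨δ, hδ, fun y hy => hb (by simpa [Metric.mem_ball, mdist, dist_comm] using hy)⟩
  · rintro ⟨δ, hδ, hb⟩
    exact ⟨δ, hδ, fun y hy => hb y (by simpa [Metric.mem_ball, mdist, dist_comm] using hy)⟩

lemma cont_neg_nbhd {n : ℕ} (f : (PairIdx n → ℝ) → ℝ) (hf : Continuous f)
    (x : PairIdx n → ℝ) (hx : f x < 0) :
    ∃ δ > 0, ∀ u : PairIdx n → ℝ, (∀ p, |u p - x p| < δ) → f u < 0 := by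
  have hopen : IsOpen (f ⁻¹' Set.Iio 0) := (isOpen_Iio).preimage hf
  rcases Metric.isOpen_iff.1 hopen x hx with ⟨δ, hδ, hball⟩
  refine ⟨δ, hδ, fun u hu => ?_⟩
  have : u ∈ Metric.ball x δ := by
    rw [Metric.mem_ball, dist_pi_lt_iff hδ]
    intro p
    simpa [Real.dist_eq] using hu p
  exact hball this

lemma exists_distinct_points {X : Type*} (m : MetricSpace X) (p : X)
    (h : ∀ δ : ℝ, 0 < δ → ∃ q, q ≠ p ∧ mdist m p q < δ) {t : ℝ} (ht : 0 < t) :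
    ∃ x : ℕ → X, (∀ k, mdist m p (x k) < t) ∧ Function.Injective x := by
  choose g hgne hglt using h
  obtain ⟨u, hu⟩ : ∃ u : ℕ → {q : X // q ≠ p ∧ mdist m p q < t}, ∀ k,
      (u (k+1)).1 = g (mdist m p (u k).1) (mdist_pos m (Ne.symm (u k).2.1)) :=
    ⟨fun k => Nat.rec ⟨g t ht, hgne t ht, hglt t ht⟩
      (fun _ prev => ⟨g (mdist m p prev.1) (mdist_pos m (Ne.symm prev.2.1)),
        hgne _ _, lt_trans (hglt _ _) prev.2.2⟩) k, fun _ => rfl⟩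
  have hanti : StrictAnti fun k => mdist m p (u k).1 :=
    strictAnti_nat_of_succ_lt fun k => by rw [hu k]; exact hglt _ _
  exact ⟨fun k => (u k).1, fun k => (u k).2.2,
    fun k l hkl => hanti.injective (by simp only [hkl])⟩

lemma exists_failing_close (X : Type u) [tX : TopologicalSpace X]
    (hX : ¬DiscreteTopology X) (n : ℕ) (hn : 2 ≤ n) (f : (PairIdx n → ℝ) → ℝ)
    (hsub : PositivelySubHomogeneous f)
    (hcex : ∃ (Y : Type v) (mY : MetricSpace Y), ¬SatisfiesMetricIneq mY n f)
    (d : Met X) (ε : ℝ≥0∞) (hε : 0 < ε) :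
    ∃ e : Met X, metD d.1 e.1 < ε ∧ ¬SatisfiesMetricIneq e.1 n f := by
  classical
  obtain ⟨Y, mY, hY⟩ := hcex
  simp only [SatisfiesMetricIneq, not_forall, not_le] at hY
  obtain ⟨a, ha⟩ := hY
  obtain ⟨c, hc, hhom⟩ := hsub
  -- a non-isolated point
  obtain ⟨p, hp⟩ : ∃ p : X, ¬ IsOpen ({p} : Set X) := by
    by_contra h
    push_neg at h
    exact hX (discreteTopology_iff_isOpen_singleton.2 h)
  set dd := mdist d.1 with hdd
  have hddcomm : ∀ z w, dd z w = dd w z := fun z w => mdist_comm d.1 z w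
  have hopen := isOpen_iff_of_mem d.1 d.2
  have hnear : ∀ δ : ℝ, 0 < δ → ∃ q : X, q ≠ p ∧ dd p q < δ := by
    intro δ hδ
    by_contra h
    push_neg at h
    refine hp ((hopen {p}).2 ?_)
    intro x hx
    rw [Set.mem_singleton_iff] at hx
    subst hx
    refine ⟨δ, hδ, fun y hy => ?_⟩
    rw [Set.mem_singleton_iff]
    by_contra hyp
    exact absurd hy (not_lt.2 (h y hyp))
  -- scale
  obtain ⟨κ, hκ0, hκε⟩ := ENNReal.lt_iff_exists_nnreal_btwn.1 hε
  have hκ0' : 0 < (κ : ℝ) := by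
    have := ENNReal.coe_pos.1 hκ0
    exact_mod_cast this
  set t : ℝ := (κ : ℝ) / 2 with hT
  have ht : 0 < t := by positivity
  obtain ⟨x, hxt, hxinj⟩ := exists_distinct_points d.1 p hnear ht
  -- representatives
  haveI : Nonempty (Fin n) := ⟨⟨0, by omega⟩⟩
  set xx : Fin n → X := fun i => x (i : ℕ) with hxx
  have hxxinj : ∀ i j : Fin n, xx i = xx j → i = j := by
    intro i j hij
    exact Fin.ext (hxinj hij)
  set S : Fin n → Finset (Fin n) := fun i => Finset.univ.filter (fun j => a j = a i) with hS
  have hSne : ∀ i, (S i).Nonempty := fun i => ⟨i, by simp [hS]⟩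
  set mi : Fin n → Fin n := fun i => (S i).min' (hSne i) with hmi
  have hmem : ∀ i j, a j = a i → j ∈ S i := by
    intro i j h
    rw [hS]
    simp [h]
  have hami : ∀ i, a (mi i) = a i := by
    intro i
    have h1 : mi i ∈ S i := (S i).min'_mem (hSne i)
    rw [hS] at h1
    simpa using (Finset.mem_filter.1 h1).2
  have hmieq : ∀ i j, a i = a j → mi i = mi j := by
    intro i j hij
    apply le_antisymm
    · exact Finset.min'_le (S i) (mi j) (hmem i (mi j) ((hami j).trans hij.symm))
    · exact Finset.min'_le (S j) (mi i) (hmem j (mi i) ((hami i).trans hij))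
  set φ : Fin n → X := fun i => xx (mi i) with hφ
  have hφt : ∀ i, dd p (φ i) < t := fun i => hxt _
  have hφeq : ∀ i j, a i = a j → φ i = φ j := fun i j h => congrArg xx (hmieq i j h)
  have hφne : ∀ i j, a i ≠ a j → φ i ≠ φ j := by
    intro i j hij hh
    exact hij ((hami i).symm.trans ((congrArg a (hxxinj _ _ hh)).trans (hami j)))
  -- distances in the counterexample
  set v : Fin n → Fin n → ℝ := fun i j => mdist mY (a i) (a j) with hv
  have hvnn : ∀ i j, 0 ≤ v i j := fun i j => mdist_nonneg _ _ _
  have hv0 : ∀ i j, a i = a j → v i j = 0 := fun i j h => by simp only [hv, h, mdist_self]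
  have hvsymm : ∀ i j, v i j = v j i := fun i j => mdist_comm _ _ _
  have hvtri : ∀ i j k, v i k ≤ v i j + v j k := fun i j k => mdist_triangle _ _ _ _
  have hvzero : ∀ i j, v i j = 0 → a i = a j := fun i j h => (mdist_eq_zero mY).1 h
  have hne2 : (Finset.univ : Finset (Fin n × Fin n)).Nonempty := Finset.univ_nonempty
  set V : ℝ := Finset.univ.sup' hne2 (fun q : Fin n × Fin n => v q.1 q.2) with hV
  have hV0 : 0 ≤ V := by
    have i0 : Fin n := ⟨0, by omega⟩
    have h1 : v i0 i0 ≤ V := by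
      rw [hV]
      exact Finset.le_sup' (fun q : Fin n × Fin n => v q.1 q.2) (Finset.mem_univ (i0, i0))
    have h2 : v i0 i0 = 0 := hv0 i0 i0 rfl
    linarith
  set δ0 : ℝ := Finset.univ.inf' hne2
    (fun q : Fin n × Fin n => if a q.1 = a q.2 then 1 else dd (φ q.1) (φ q.2)) with hδ0
  have hδ0pos : 0 < δ0 := by
    rw [hδ0]
    refine (Finset.lt_inf'_iff _).2 fun q _ => ?_
    by_cases h : a q.1 = a q.2
    · simp [h]
    · simp only [if_neg h]
      exact mdist_pos _ (hφne _ _ h)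
  set r : ℝ := δ0 / (V + 1) with hr
  have hrpos : 0 < r := div_pos hδ0pos (by linarith)
  have hrv : ∀ i j, r * v i j ≤ dd (φ i) (φ j) := by
    intro i j
    by_cases h : a i = a j
    · rw [hv0 i j h, mul_zero]
      exact mdist_nonneg _ _ _
    · have h1 : v i j ≤ V := by
        rw [hV]
        exact Finset.le_sup' (fun q : Fin n × Fin n => v q.1 q.2) (Finset.mem_univ (i, j))
      have h2 : δ0 ≤ dd (φ i) (φ j) := by
        have h3 := Finset.inf'_le (fun q : Fin n × Fin n =>
          if a q.1 = a q.2 then 1 else dd (φ q.1) (φ q.2)) (Finset.mem_univ (i, j))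
        rw [if_neg h] at h3
        rw [hδ0]
        exact h3
      have h3 : r * v i j ≤ r * (V + 1) := mul_le_mul_of_nonneg_left (by linarith) hrpos.le
      have h4 : r * (V + 1) = δ0 := by rw [hr]; field_simp
      linarith
  -- the modified distance
  set E : X → X → ℝ := fun z w => min (dd z w)
    (Finset.univ.inf' hne2 fun q : Fin n × Fin n =>
      dd z (φ q.1) + r * v q.1 q.2 + dd (φ q.2) w) with hE
  have hEterm : ∀ z w (q : Fin n × Fin n),
      E z w ≤ dd z (φ q.1) + r * v q.1 q.2 + dd (φ q.2) w :=
    fun z w q => (min_le_right _ _).trans (Finset.inf'_le _ (Finset.mem_univ q))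
  have hEled : ∀ z w, E z w ≤ dd z w := fun z w => min_le_left _ _
  have hEmin : ∀ z w (b : ℝ), b ≤ dd z w →
      (∀ q : Fin n × Fin n, b ≤ dd z (φ q.1) + r * v q.1 q.2 + dd (φ q.2) w) → b ≤ E z w :=
    fun z w b h1 h2 => le_min h1 (Finset.le_inf' _ _ fun q _ => h2 q)
  have hrepr : ∀ z w, E z w = dd z w ∨
      ∃ q : Fin n × Fin n, E z w = dd z (φ q.1) + r * v q.1 q.2 + dd (φ q.2) w := by
    intro z w
    rcases min_cases (dd z w) (Finset.univ.inf' hne2 fun q : Fin n × Fin n =>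
      dd z (φ q.1) + r * v q.1 q.2 + dd (φ q.2) w) with ⟨h, _⟩ | ⟨h, _⟩
    · exact Or.inl h
    · obtain ⟨q, _, hq⟩ := Finset.exists_mem_eq_inf' hne2 (fun q : Fin n × Fin n =>
        dd z (φ q.1) + r * v q.1 q.2 + dd (φ q.2) w)
      exact Or.inr ⟨q, h.trans hq⟩
  have hEnn : ∀ z w, 0 ≤ E z w := by
    intro z w
    rcases hrepr z w with h | ⟨q, h⟩
    · rw [h]; exact mdist_nonneg _ _ _
    · rw [h]
      have h1 := mdist_nonneg d.1 z (φ q.1)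
      have h2 := mdist_nonneg d.1 (φ q.2) w
      have h3 := mul_nonneg hrpos.le (hvnn q.1 q.2)
      linarith
  have hEself : ∀ z, E z z = 0 := fun z =>
    le_antisymm ((hEled z z).trans_eq (mdist_self d.1 z)) (hEnn z z)
  have hEcomm : ∀ z w, E z w = E w z := by
    have key : ∀ z w, E z w ≤ E w z := by
      intro z w
      refine hEmin w z (E z w) ((hEled z w).trans_eq (mdist_comm _ _ _)) fun q => ?_
      calc E z w ≤ dd z (φ q.2) + r * v q.2 q.1 + dd (φ q.1) w := hEterm z w (q.2, q.1)
        _ = dd w (φ q.1) + r * v q.1 q.2 + dd (φ q.2) z := by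
            rw [hvsymm q.2 q.1, hddcomm z (φ q.2), hddcomm (φ q.1) w]; ring
    exact fun z w => le_antisymm (key z w) (key w z)
  have hEtri : ∀ x' y' z', E x' z' ≤ E x' y' + E y' z' := by
    intro x' y' z'
    rcases hrepr x' y' with h1 | ⟨⟨i, j⟩, h1⟩ <;> rcases hrepr y' z' with h2 | ⟨⟨k, l⟩, h2⟩
    · calc E x' z' ≤ dd x' z' := hEled _ _
        _ ≤ dd x' y' + dd y' z' := mdist_triangle _ _ _ _
        _ = _ := by rw [h1, h2]
    · have h3 := hEterm x' z' (k, l)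
      have h4 : dd x' (φ k) ≤ dd x' y' + dd y' (φ k) := mdist_triangle _ _ _ _
      rw [h1, h2]
      dsimp only at h3 ⊢
      linarith
    · have h3 := hEterm x' z' (i, j)
      have h4 : dd (φ j) z' ≤ dd (φ j) y' + dd y' z' := mdist_triangle _ _ _ _
      rw [h1, h2]
      dsimp only at h3 ⊢
      linarith
    · have h3 := hEterm x' z' (i, l)
      have h5 : v i l ≤ v i j + v j k + v k l := by
        have g1 := hvtri i j l
        have g2 := hvtri j k l
        linarith
      have h6 : r * v i l ≤ r * (v i j + v j k + v k l) :=
        mul_le_mul_of_nonneg_left h5 hrpos.le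
      rw [mul_add, mul_add] at h6
      have h7 : r * v j k ≤ dd (φ j) (φ k) := hrv j k
      have h8 : dd (φ j) (φ k) ≤ dd (φ j) y' + dd y' (φ k) := mdist_triangle _ _ _ _
      rw [h1, h2]
      dsimp only at h3 ⊢
      linarith
  have hEzero : ∀ z w, E z w = 0 → z = w := by
    intro z w h
    rcases hrepr z w with h1 | ⟨q, h1⟩
    · exact (mdist_eq_zero d.1).1 (h1.symm.trans h)
    · have h2 := h1.symm.trans h
      have n1 := mdist_nonneg d.1 z (φ q.1)
      have n2 := mul_nonneg hrpos.le (hvnn q.1 q.2)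
      have n3 := mdist_nonneg d.1 (φ q.2) w
      have e1 : dd z (φ q.1) = 0 := by linarith
      have e3 : dd (φ q.2) w = 0 := by linarith
      have e2 : r * v q.1 q.2 = 0 := by linarith
      have hz : z = φ q.1 := (mdist_eq_zero d.1).1 e1
      have hw : φ q.2 = w := (mdist_eq_zero d.1).1 e3
      have hv' : v q.1 q.2 = 0 := by
        rcases mul_eq_zero.1 e2 with h' | h'
        · exact absurd h' hrpos.ne'
        · exact h'
      rw [hz, ← hw]
      exact hφeq _ _ (hvzero _ _ hv')
  have hEφ : ∀ i j, E (φ i) (φ j) = r * v i j := by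
    intro i j
    apply le_antisymm
    · have h1 := hEterm (φ i) (φ j) (i, j)
      have h2 : dd (φ i) (φ i) = 0 := mdist_self d.1 _
      have h3 : dd (φ j) (φ j) = 0 := mdist_self d.1 _
      dsimp only at h1
      linarith
    · rcases hrepr (φ i) (φ j) with h1 | ⟨⟨k, l⟩, h1⟩
      · rw [h1]; exact hrv i j
      · have g1 : r * v i k ≤ dd (φ i) (φ k) := hrv i k
        have g2 : r * v l j ≤ dd (φ l) (φ j) := hrv l j
        have g3 : v i j ≤ v i k + v k l + v l j := by
          have t1 := hvtri i k j
          have t2 := hvtri k l j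
          linarith
        have g4 : r * v i j ≤ r * (v i k + v k l + v l j) :=
          mul_le_mul_of_nonneg_left g3 hrpos.le
        rw [mul_add, mul_add] at g4
        rw [h1]
        dsimp only
        linarith
  have hclose : ∀ z w, dd z w - E z w ≤ 2 * t := by
    intro z w
    rcases hrepr z w with h1 | ⟨q, h1⟩
    · rw [h1]; linarith
    · have h2 : dd z w ≤ dd z (φ q.1) + dd (φ q.1) (φ q.2) + dd (φ q.2) w := by
        have t1 := mdist_triangle d.1 z (φ q.1) w
        have t2 := mdist_triangle d.1 (φ q.1) (φ q.2) w
        linarith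
      have h3 : dd (φ q.1) (φ q.2) ≤ dd (φ q.1) p + dd p (φ q.2) := mdist_triangle _ _ _ _
      have h4 : dd (φ q.1) p < t := by rw [hddcomm (φ q.1) p]; exact hφt q.1
      have h5 := hφt q.2
      have h6 := mul_nonneg hrpos.le (hvnn q.1 q.2)
      rw [h1]
      linarith
  set vb : ℝ := Finset.univ.inf' hne2
    (fun q : Fin n × Fin n => if a q.1 = a q.2 then 1 else v q.1 q.2) with hvb
  have hvbpos : 0 < vb := by
    rw [hvb]
    refine (Finset.lt_inf'_iff _).2 fun q _ => ?_
    by_cases h : a q.1 = a q.2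
    · simp [h]
    · simp only [if_neg h]
      exact mdist_pos mY h
  have hlow : ∀ z w, E z w < r * vb → dd z w ≤ E z w := by
    intro z w hlt
    rcases hrepr z w with h1 | ⟨q, h1⟩
    · exact h1.ge
    · by_cases h : a q.1 = a q.2
      · have hφq : φ q.1 = φ q.2 := hφeq _ _ h
        have h2 : dd z w ≤ dd z (φ q.1) + dd (φ q.2) w := by
          have t1 := mdist_triangle d.1 z (φ q.1) w
          rw [hφq] at t1
          rw [hφq]
          linarith
        rw [h1, hv0 q.1 q.2 h, mul_zero]
        linarith
      · exfalso
        have hb : vb ≤ v q.1 q.2 := by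
          have h3 := Finset.inf'_le (fun q' : Fin n × Fin n =>
            if a q'.1 = a q'.2 then 1 else v q'.1 q'.2) (Finset.mem_univ q)
          rw [if_neg h] at h3
          rw [hvb]
          exact h3
        have h4 : r * vb ≤ r * v q.1 q.2 := mul_le_mul_of_nonneg_left hb hrpos.le
        have h5 : r * v q.1 q.2 ≤ E z w := by
          rw [h1]
          have := mdist_nonneg d.1 z (φ q.1)
          have := mdist_nonneg d.1 (φ q.2) w
          linarith
        linarith
  have hH : ∀ s : Set X, IsOpen s ↔ ∀ x' ∈ s, ∃ ε' > 0, ∀ y, E x' y < ε' → y ∈ s := by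
    intro s
    rw [hopen s]
    constructor
    · intro h x' hx'
      obtain ⟨δ, hδ, hb⟩ := h x' hx'
      refine ⟨min δ (r * vb), lt_min hδ (mul_pos hrpos hvbpos), fun y hy => ?_⟩
      have h1 : E x' y < r * vb := hy.trans_le (min_le_right _ _)
      have h2 : dd x' y ≤ E x' y := hlow _ _ h1
      exact hb y (lt_of_le_of_lt h2 (hy.trans_le (min_le_left _ _)))
    · intro h x' hx'
      obtain ⟨ε', hε', hb⟩ := h x' hx'
      exact ⟨ε', hε', fun y hy => hb y (lt_of_le_of_lt (hEled x' y) hy)⟩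
  let m : MetricSpace X := MetricSpace.ofDistTopology E hEself hEcomm hEtri hH hEzero
  have hm : m ∈ MetricsOn X := rfl
  refine ⟨⟨m, hm⟩, ?_, ?_⟩
  · have hb : metD d.1 m ≤ ENNReal.ofReal (2 * t) := by
      refine iSup_le fun q => ?_
      refine ENNReal.ofReal_le_ofReal ?_
      have h1 : mdist m q.1 q.2 = E q.1 q.2 := rfl
      rw [h1]
      have h2 := hclose q.1 q.2
      have h3 := hEled q.1 q.2
      rw [abs_le]
      constructor <;> linarith
    have h2t : ENNReal.ofReal (2 * t) < ε := by
      have hteq : (2 : ℝ) * t = (κ : ℝ) := by rw [hT]; ring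
      rw [hteq, ENNReal.ofReal_coe_nnreal]
      exact hκε
    exact lt_of_le_of_lt hb h2t
  · intro hs
    have h0 := hs φ
    have heq : (fun p' : PairIdx n => mdist m (φ p'.1.1) (φ p'.1.2)) =
        r • (fun p' : PairIdx n => mdist mY (a p'.1.1) (a p'.1.2)) := by
      funext p'
      show E (φ p'.1.1) (φ p'.1.2) = r * v p'.1.1 p'.1.2
      exact hEφ _ _
    rw [heq] at h0
    have h1 := hhom (fun p' : PairIdx n => mdist mY (a p'.1.1) (a p'.1.2)) r hrpos
    have h2 : (0:ℝ) < r ^ c := Real.rpow_pos_of_pos hrpos c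
    nlinarith [ha]

theorem failing_metric_inequality_dense_open (X : Type u) [TopologicalSpace X]
    [TopologicalSpace.MetrizableSpace X] (hX : ¬DiscreteTopology X)
    (n : ℕ) (hn : 2 ≤ n) (f : (PairIdx n → ℝ) → ℝ) (hf : Continuous f)
    (hsub : PositivelySubHomogeneous f)
    (hcex : ∃ (Y : Type v) (mY : MetricSpace Y), ¬SatisfiesMetricIneq mY n f) :
    IsOpen { d : Met X | ¬SatisfiesMetricIneq d.1 n f } ∧
    Dense { d : Met X | ¬SatisfiesMetricIneq d.1 n f } := by
  constructor
  · rw [isOpen_iff_forall_mem_open]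
    intro d hd
    simp only [Set.mem_setOf_eq, SatisfiesMetricIneq, not_forall, not_le] at hd
    obtain ⟨a, ha⟩ := hd
    obtain ⟨δ, hδ, hball⟩ := cont_neg_nbhd f hf
      (fun p => mdist d.1 (a p.1.1) (a p.1.2)) ha
    refine ⟨{ e : Met X | metD d.1 e.1 < ENNReal.ofReal δ }, ?_, isOpen_ball d
      (ENNReal.ofReal_pos.2 hδ), ?_⟩
    · intro e he
      have hdiff : ∀ p : PairIdx n,
          |mdist e.1 (a p.1.1) (a p.1.2) - mdist d.1 (a p.1.1) (a p.1.2)| < δ := by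
        intro p
        have h1 : ENNReal.ofReal |mdist d.1 (a p.1.1) (a p.1.2) - mdist e.1 (a p.1.1) (a p.1.2)|
            ≤ metD d.1 e.1 :=
          le_iSup (fun q : X × X => ENNReal.ofReal |mdist d.1 q.1 q.2 - mdist e.1 q.1 q.2|)
            (a p.1.1, a p.1.2)
        have h2 := lt_of_le_of_lt h1 he
        rw [ENNReal.ofReal_lt_ofReal_iff hδ] at h2
        rw [abs_sub_comm]
        exact h2
      have := hball _ hdiff
      simp only [Set.mem_setOf_eq, SatisfiesMetricIneq, not_forall, not_le]
      exact ⟨a, this⟩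
    · show metD d.1 d.1 < ENNReal.ofReal δ
      rw [metD_self]
      exact ENNReal.ofReal_pos.2 hδ
  · rw [dense_iff_inter_open]
    rintro U hU ⟨x, hx⟩
    obtain ⟨ε, hε, hball⟩ := exists_ball_subset hU x hx
    obtain ⟨e, he, hefail⟩ := exists_failing_close X hX n hn f hsub hcex x ε hε
    exact ⟨e, hball he, hefail⟩
end
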